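/- arXiv:1209.3214 — 6 statements merged into one kernel-verified Lean document; each statement's English description precedes it below -/
import Mathlib

section
/- Let G be a complete t-partite graph on n vertices with t ≥ 3, and write n = tk + r with 0 ≤ r < t. Then q₁(G) ≤ ((3t−4)k + 3r − 2 + √(t²k² + ((2r+4)t − 8r)k + (r−2)²))/2, with equality if and only if G is the Turán graph T_{n,t}. -/
open SimpleGraph

/-- The signless Laplacian matrix `Q(G) = D(G) + A(G)` of a simple graph. -/
noncomputable def signlessLaplacian {V : Type*} [Fintype V] [DecidableEq V]
    (G : SimpleGraph V) : Matrix V V ℝ := by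
  classical exact Matrix.diagonal (fun v => (G.degree v : ℝ)) + G.adjMatrix ℝ

/-- The signless Laplacian spectral radius: the largest eigenvalue of `Q(G)`. -/
noncomputable def q1 {V : Type*} [Fintype V] [DecidableEq V] (G : SimpleGraph V) : ℝ :=
  sSup {μ : ℝ | ∃ x : V → ℝ, x ≠ 0 ∧ (signlessLaplacian G).mulVec x = μ • x}

/-- The join `G ∇ H` of two simple graphs. -/
def gJoin {α β : Type*} (G : SimpleGraph α) (H : SimpleGraph β) : SimpleGraph (α ⊕ β) where
  Adj x y :=
    Sum.elim (fun a => Sum.elim (fun b => G.Adj a b) (fun _ => True) y)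
             (fun a => Sum.elim (fun _ => True) (fun b => H.Adj a b) y) x
  symm := ⟨by rintro (a|a) (b|b) h <;> simp_all [SimpleGraph.adj_comm]⟩
  loopless := ⟨by rintro (a|a) h <;> simp_all⟩

/-- `G` is a complete multipartite graph with exactly `t` (nonempty) parts. -/
def IsCompleteMultipartite' {α : Type*} (G : SimpleGraph α) (t : ℕ) : Prop :=
  ∃ f : α → Fin t, Function.Surjective f ∧ ∀ u v, G.Adj u v ↔ f u ≠ f v

/-- The kite graph `Ki_{n,ω}`: a clique on `{0,…,ω-1}` together with a path on the
remaining vertices, attached to the clique by a bridge. -/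
def kite (n ω : ℕ) : SimpleGraph (Fin n) where
  Adj i j := i ≠ j ∧ (((i : ℕ) < ω ∧ (j : ℕ) < ω) ∨
    ((i : ℕ) + 1 = (j : ℕ) ∧ ω ≤ (j : ℕ)) ∨ ((j : ℕ) + 1 = (i : ℕ) ∧ ω ≤ (i : ℕ)))
  symm := ⟨by rintro i j ⟨h1, h2⟩; exact ⟨h1.symm, by tauto⟩⟩
  loopless := ⟨fun i h => h.1 rfl⟩

/-- The closed-form bound `((3ω-4)k + 3r - 2 + √(k²ω² + ((2r+4)ω-8r)k + (r-2)²))/2`. -/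
noncomputable def turanBound (ω k r : ℕ) : ℝ :=
  ((3 * (ω : ℝ) - 4) * k + 3 * r - 2 +
    Real.sqrt ((k : ℝ)^2 * (ω : ℝ)^2 + ((2 * (r : ℝ) + 4) * ω - 8 * r) * k + ((r : ℝ) - 2)^2)) / 2


open Finset Polynomial



section Alg
variable {t k r : ℕ} (ht : 3 ≤ t) (hr : r < t) (hk : 1 ≤ k)

/-- discriminant identity -/
lemma disc_eq :
    (k : ℝ)^2 * (t : ℝ)^2 + ((2 * (r : ℝ) + 4) * t - 8 * r) * k + ((r : ℝ) - 2)^2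
      = ((t:ℝ)*k + r - 4*k - 2)^2 + 8*((t:ℝ)-2)*((k:ℝ)^2+k) := by ring

include ht hk in
lemma cpos : 0 < turanBound t k r - (t*k + r : ℕ) := by
  have h1 : (0:ℝ) < 8*((t:ℝ)-2)*((k:ℝ)^2+k) := by
    have : (3:ℝ) ≤ t := by exact_mod_cast ht
    have : (1:ℝ) ≤ k := by exact_mod_cast hk
    nlinarith
  set A : ℝ := (t:ℝ)*k + r - 4*k - 2 with hA
  have hD : (k : ℝ)^2 * (t : ℝ)^2 + ((2 * (r : ℝ) + 4) * t - 8 * r) * k + ((r : ℝ) - 2)^2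
      = A^2 + 8*((t:ℝ)-2)*((k:ℝ)^2+k) := disc_eq
  have hsq : Real.sqrt (A^2 + 8*((t:ℝ)-2)*((k:ℝ)^2+k)) > |A| := by
    rw [← Real.sqrt_sq_eq_abs]
    exact Real.sqrt_lt_sqrt (sq_nonneg A) (by linarith)
  have habs : -A ≤ |A| := neg_le_abs A
  have : turanBound t k r - (t*k + r : ℕ)
      = (A + Real.sqrt ((k : ℝ)^2 * (t : ℝ)^2 + ((2 * (r : ℝ) + 4) * t - 8 * r) * k + ((r : ℝ) - 2)^2))/2 := by
    rw [turanBound]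
    push_cast
    ring
  rw [this, hD]
  linarith

include ht hk in
lemma quad_c : (turanBound t k r - (t*k + r : ℕ))^2
    = ((t:ℝ)*k + r - 4*k - 2) * (turanBound t k r - (t*k + r : ℕ)) + 2*((t:ℝ)-2)*((k:ℝ)^2+k) := by
  have h1 : (0:ℝ) ≤ 8*((t:ℝ)-2)*((k:ℝ)^2+k) := by
    have : (3:ℝ) ≤ t := by exact_mod_cast ht
    have : (1:ℝ) ≤ k := by exact_mod_cast hk
    nlinarith
  set A : ℝ := (t:ℝ)*k + r - 4*k - 2 with hA
  have hD : (k : ℝ)^2 * (t : ℝ)^2 + ((2 * (r : ℝ) + 4) * t - 8 * r) * k + ((r : ℝ) - 2)^2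
      = A^2 + 8*((t:ℝ)-2)*((k:ℝ)^2+k) := disc_eq
  have hDnn : (0:ℝ) ≤ A^2 + 8*((t:ℝ)-2)*((k:ℝ)^2+k) := by positivity
  have hsq : (Real.sqrt (A^2 + 8*((t:ℝ)-2)*((k:ℝ)^2+k)))^2 = A^2 + 8*((t:ℝ)-2)*((k:ℝ)^2+k) :=
    Real.sq_sqrt hDnn
  have hc : turanBound t k r - (t*k + r : ℕ)
      = (A + Real.sqrt (A^2 + 8*((t:ℝ)-2)*((k:ℝ)^2+k)))/2 := by
    rw [turanBound, hD]; push_cast; ring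
  rw [hc]
  nlinarith [hsq]

end Alg

section Chord
variable {c : ℝ} (hc : 0 < c)

lemma denom_pos (m : ℕ) (hc : 0 < c) : 0 < c + 2*(m:ℝ) := by positivity

include hc in
lemma chord_eq (k m : ℕ) :
    (k:ℝ)/(c+2*k) + ((m:ℝ)-k)*(c/((c+2*k)*(c+2*k+2))) - (m:ℝ)/(c+2*m)
      = 2*c*((m:ℝ)-k)*((m:ℝ)-k-1)/((c+2*k)*(c+2*k+2)*(c+2*m)) := by
  have h1 : c+2*(k:ℝ) ≠ 0 := ne_of_gt (denom_pos k hc)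
  have h2 : c+2*(k:ℝ)+2 ≠ 0 := by positivity
  have h3 : c+2*(m:ℝ) ≠ 0 := ne_of_gt (denom_pos m hc)
  field_simp
  ring

lemma fac_nonneg (k m : ℕ) : 0 ≤ ((m:ℝ)-k)*((m:ℝ)-k-1) := by
  rcases le_or_gt m k with h | h
  · have : (m:ℝ) ≤ k := by exact_mod_cast h
    nlinarith
  · have : (k:ℝ) + 1 ≤ m := by exact_mod_cast h
    nlinarith

lemma fac_eq_zero_iff (k m : ℕ) : ((m:ℝ)-k)*((m:ℝ)-k-1) = 0 ↔ m = k ∨ m = k+1 := by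
  rw [mul_eq_zero, sub_eq_zero, sub_eq_zero]
  constructor
  · rintro (h | h)
    · left; exact_mod_cast h
    · right; have : (m:ℝ) = (k:ℝ)+1 := by linarith
      exact_mod_cast this
  · rintro (h | h)
    · left; exact_mod_cast h
    · right; have : (m:ℝ) = (k:ℝ)+1 := by exact_mod_cast h
      linarith

lemma slope_eq (k : ℕ) (hc : 0 < c) :
    ((k:ℝ)+1)/(c+2*k+2) - (k:ℝ)/(c+2*k) = c/((c+2*k)*(c+2*k+2)) := by
  have h1 : c+2*(k:ℝ) ≠ 0 := ne_of_gt (denom_pos k hc)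
  have h2 : c+2*(k:ℝ)+2 ≠ 0 := by positivity
  field_simp
  ring

include hc in
lemma sum_h_le {t k r : ℕ} (m : Fin t → ℕ) (hsum : ∑ i, m i = t*k+r)
    (hbal : ((t:ℝ)-r)*((k:ℝ)/(c+2*k)) + r*(((k:ℝ)+1)/(c+2*k+2)) = 1) :
    (∑ i, (m i : ℝ)/(c+2*m i) ≤ 1) ∧
      ((∑ i, (m i : ℝ)/(c+2*m i)) = 1 ↔ ∀ i, m i = k ∨ m i = k+1) := by
  have hsumR : ∑ i : Fin t, (m i : ℝ) = (t:ℝ)*k + r := by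
    rw [← Nat.cast_sum, hsum]; push_cast; ring
  have hsub : ∑ i : Fin t, ((m i:ℝ) - k) = (r:ℝ) := by
    rw [Finset.sum_sub_distrib, hsumR, Finset.sum_const, Finset.card_univ, Fintype.card_fin,
      nsmul_eq_mul]
    ring
  have hlin : ∑ i : Fin t, ((k:ℝ)/(c+2*k) + ((m i:ℝ)-k)*(c/((c+2*k)*(c+2*k+2)))) = 1 := by
    rw [Finset.sum_add_distrib, ← Finset.sum_mul, hsub, Finset.sum_const, Finset.card_univ,
      Fintype.card_fin, nsmul_eq_mul]
    have hs := slope_eq k hc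
    nlinarith [hs, hbal]
  have key : 1 - ∑ i, (m i : ℝ)/(c+2*m i)
      = ∑ i, 2*c*((m i:ℝ)-k)*((m i:ℝ)-k-1)/((c+2*k)*(c+2*k+2)*(c+2*(m i))) := by
    calc 1 - ∑ i, (m i : ℝ)/(c+2*m i)
        = (∑ i : Fin t, ((k:ℝ)/(c+2*k) + ((m i:ℝ)-k)*(c/((c+2*k)*(c+2*k+2)))))
            - ∑ i, (m i : ℝ)/(c+2*m i) := by rw [hlin]
      _ = ∑ i : Fin t, (((k:ℝ)/(c+2*k) + ((m i:ℝ)-k)*(c/((c+2*k)*(c+2*k+2))))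
            - (m i : ℝ)/(c+2*m i)) := (Finset.sum_sub_distrib _ _).symm
      _ = ∑ i, 2*c*((m i:ℝ)-k)*((m i:ℝ)-k-1)/((c+2*k)*(c+2*k+2)*(c+2*(m i))) :=
          Finset.sum_congr rfl fun i _ => chord_eq hc k (m i)
  have termnn : ∀ i : Fin t, i ∈ Finset.univ →
      0 ≤ 2*c*((m i:ℝ)-k)*((m i:ℝ)-k-1)/((c+2*k)*(c+2*k+2)*(c+2*(m i))) := by
    intro i _
    have h1 := fac_nonneg k (m i)
    have h2 : 0 < (c+2*(k:ℝ))*(c+2*(k:ℝ)+2)*(c+2*(m i:ℝ)) := by positivity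
    have : 0 ≤ 2*c*(((m i:ℝ)-k)*((m i:ℝ)-k-1)) := by positivity
    rw [← mul_assoc] at this
    exact div_nonneg this (le_of_lt h2)
  constructor
  · have : 0 ≤ 1 - ∑ i, (m i : ℝ)/(c+2*m i) := key ▸ Finset.sum_nonneg termnn
    linarith
  · constructor
    · intro h
      have hz : ∑ i, 2*c*((m i:ℝ)-k)*((m i:ℝ)-k-1)/((c+2*k)*(c+2*k+2)*(c+2*(m i))) = 0 := by
        rw [← key, h]; ring
      intro i
      have := (Finset.sum_eq_zero_iff_of_nonneg termnn).mp hz i (Finset.mem_univ i)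
      rw [_root_.div_eq_zero_iff] at this
      rcases this with h0 | h0
      · rw [← fac_eq_zero_iff k (m i)]
        have hcne : (2:ℝ)*c ≠ 0 := by positivity
        have : 2*c*(((m i:ℝ)-k)*((m i:ℝ)-k-1)) = 0 := by rw [← mul_assoc]; exact h0
        exact (mul_eq_zero.mp this).resolve_left hcne
      · exfalso
        have h2 : 0 < (c+2*(k:ℝ))*(c+2*(k:ℝ)+2)*(c+2*(m i:ℝ)) := by positivity
        exact (ne_of_gt h2) h0
    · intro h
      have : ∀ i : Fin t, i ∈ Finset.univ →
          2*c*((m i:ℝ)-k)*((m i:ℝ)-k-1)/((c+2*k)*(c+2*k+2)*(c+2*(m i))) = 0 := by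
        intro i _
        have : ((m i:ℝ)-k)*((m i:ℝ)-k-1) = 0 := (fac_eq_zero_iff k (m i)).mpr (h i)
        rw [mul_assoc, this, mul_zero, zero_div]
      have hz := Finset.sum_eq_zero this
      rw [hz] at key
      linarith

end Chord

lemma spec_finite {n : ℕ} (Q : Matrix (Fin n) (Fin n) ℝ) :
    {μ : ℝ | ∃ x : Fin n → ℝ, x ≠ 0 ∧ Q.mulVec x = μ • x}.Finite := by
  apply Set.Finite.subset (Polynomial.finite_setOf_isRoot (Matrix.charpoly_monic Q).ne_zero)
  rintro μ ⟨x, hx, heig⟩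
  have hdet : (μ • (1 : Matrix (Fin n) (Fin n) ℝ) - Q).det = 0 := by
    rw [← Matrix.exists_mulVec_eq_zero_iff]
    refine ⟨x, hx, ?_⟩
    rw [Matrix.sub_mulVec, Matrix.smul_mulVec, Matrix.one_mulVec, heig, sub_self]
  show Q.charpoly.IsRoot μ
  rw [Polynomial.IsRoot, Matrix.charpoly]
  have : Polynomial.eval μ (Matrix.charmatrix Q).det
      = ((Matrix.charmatrix Q).map (Polynomial.evalRingHom μ)).det := by
    have := RingHom.map_det (Polynomial.evalRingHom μ) (Matrix.charmatrix Q)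
    simpa [RingHom.mapMatrix_apply] using this
  rw [this]
  have hmap : (Matrix.charmatrix Q).map (Polynomial.evalRingHom μ)
      = μ • (1 : Matrix (Fin n) (Fin n) ℝ) - Q := by
    ext i j
    by_cases h : i = j
    · subst h
      simp [Matrix.charmatrix_apply_eq, Matrix.map_apply]
    · simp [Matrix.charmatrix_apply_ne _ _ _ h, Matrix.map_apply, Matrix.one_apply_ne h, h]
  rw [hmap, hdet]

lemma count_mod (t k r j : ℕ) (hr : r < t) (hj : j < t) :
    ((Finset.range (t*k+r)).filter (fun v => v % t = j)).card
      = k + if j < r then 1 else 0 := by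
  have ht : 0 < t := by omega
  rw [← Finset.card_range (k + if j < r then 1 else 0)]
  apply (Finset.card_bij (fun (i : ℕ) (_ : i ∈ Finset.range (k + if j < r then 1 else 0)) => j + t*i) ?_ ?_ ?_).symm
  · intro i hi
    rw [Finset.mem_range] at hi
    rw [Finset.mem_filter, Finset.mem_range]
    constructor
    · by_cases hjr : j < r
      · rw [if_pos hjr] at hi
        have : i ≤ k := by omega
        have h2 : t*i ≤ t*k := Nat.mul_le_mul_left t this
        rcases Nat.lt_or_ge i k with h | h
        · have : t*i + t ≤ t*k := by
            have := Nat.mul_le_mul_left t (Nat.succ_le_of_lt h)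
            calc t*i + t = t*(i+1) := by ring
              _ ≤ t*k := this
          omega
        · have hik : i = k := by omega
          subst hik
          omega
      · rw [if_neg hjr] at hi
        have : t*(i+1) ≤ t*k := Nat.mul_le_mul_left t (Nat.succ_le_of_lt hi)
        have : t*i + t ≤ t*k := by linarith [this]; 
        omega
    · simp [Nat.add_mul_mod_self_left, Nat.mod_eq_of_lt hj]
  · intro a _ b _ h
    exact Nat.eq_of_mul_eq_mul_left ht (by omega : t*a = t*b)
  · intro v hv
    rw [Finset.mem_filter, Finset.mem_range] at hv
    obtain ⟨hlt, hmod⟩ := hv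
    refine ⟨v / t, ?_, ?_⟩
    · rw [Finset.mem_range]
      have hv_eq : t * (v / t) + j = v := by
        conv_rhs => rw [← Nat.div_add_mod v t]
        rw [hmod]
      by_contra hge
      push_neg at hge
      by_cases hjr : j < r
      · rw [if_pos hjr] at hge
        have : t * (k+1) ≤ t * (v/t) := Nat.mul_le_mul_left t hge
        have : t*k + t ≤ t*(v/t) := by linarith [this]
        omega
      · rw [if_neg hjr] at hge
        have : t * k ≤ t * (v/t) := Nat.mul_le_mul_left t hge
        omega
    · conv_rhs => rw [← Nat.div_add_mod v t]
      rw [hmod]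
      ring

lemma card_fin_filter_val (n : ℕ) (p : ℕ → Prop) [DecidablePred p] :
    ((Finset.univ : Finset (Fin n)).filter (fun v : Fin n => p (v : ℕ))).card
      = ((Finset.range n).filter (fun v => p v)).card := by
  rw [← Finset.card_image_of_injective
      ((Finset.univ : Finset (Fin n)).filter (fun v : Fin n => p (v : ℕ))) Fin.val_injective]
  congr 1
  ext b
  simp only [Finset.mem_image, Finset.mem_filter, Finset.mem_range, Finset.mem_univ, true_and]
  constructor
  · rintro ⟨a, ha, rfl⟩
    exact ⟨a.isLt, ha⟩
  · rintro ⟨hb, hpb⟩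
    exact ⟨⟨b, hb⟩, hpb, rfl⟩

lemma big_count (t k r : ℕ) (m : Fin t → ℕ) (hsum : ∑ i, m i = t*k+r)
    (hbal : ∀ i, m i = k ∨ m i = k+1) (hr : r < t) :
    ((Finset.univ : Finset (Fin t)).filter (fun i => m i = k+1)).card = r := by
  have h1 : ∑ i, m i = ∑ i : Fin t, (k + if m i = k+1 then 1 else 0) := by
    apply Finset.sum_congr rfl
    intro i _
    rcases hbal i with h | h <;> rw [h] <;> simp
  rw [h1, Finset.sum_add_distrib, Finset.sum_const, Finset.card_univ, Fintype.card_fin,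
    Finset.sum_boole] at hsum
  simp only [smul_eq_mul, mul_one] at hsum
  have : (Finset.filter (fun i => m i = k+1) Finset.univ).card = r := by
    have := hsum
    push_cast at this ⊢
    omega
  exact this

lemma exists_sigma {t k : ℕ} (m₁ m₂ : Fin t → ℕ)
    (hb₁ : ∀ i, m₁ i = k ∨ m₁ i = k+1) (hb₂ : ∀ i, m₂ i = k ∨ m₂ i = k+1)
    (hcard : ((Finset.univ : Finset (Fin t)).filter (fun i => m₁ i = k+1)).card
      = ((Finset.univ : Finset (Fin t)).filter (fun i => m₂ i = k+1)).card) :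
    ∃ σ : Equiv.Perm (Fin t), ∀ i, m₂ (σ i) = m₁ i := by
  classical
  set p₁ : Fin t → Prop := fun i => m₁ i = k+1 with hp₁
  set p₂ : Fin t → Prop := fun i => m₂ i = k+1 with hp₂
  have hc1 : Fintype.card {i // p₁ i} = Fintype.card {i // p₂ i} := by
    rw [Fintype.card_subtype, Fintype.card_subtype]
    exact hcard
  have hc2 : Fintype.card {i // ¬ p₁ i} = Fintype.card {i // ¬ p₂ i} := by
    rw [Fintype.card_subtype_compl, Fintype.card_subtype_compl, hc1]
  let e1 : {i // p₁ i} ≃ {i // p₂ i} := Fintype.equivOfCardEq hc1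
  let e2 : {i // ¬ p₁ i} ≃ {i // ¬ p₂ i} := Fintype.equivOfCardEq hc2
  refine ⟨(Equiv.sumCompl p₁).symm.trans ((e1.sumCongr e2).trans (Equiv.sumCompl p₂)), ?_⟩
  intro i
  by_cases h : p₁ i
  · have h1 : (Equiv.sumCompl p₁).symm i = Sum.inl ⟨i, h⟩ :=
      Equiv.sumCompl_symm_apply_of_pos h
    simp only [Equiv.trans_apply, h1, Equiv.sumCongr_apply, Sum.map_inl,
      Equiv.sumCompl_apply_inl]
    have h2 : m₂ ((e1 ⟨i, h⟩ : {i // p₂ i}) : Fin t) = k+1 := (e1 ⟨i, h⟩).property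
    have h3 : m₁ i = k+1 := h
    rw [h2, h3]
  · have h1 : (Equiv.sumCompl p₁).symm i = Sum.inr ⟨i, h⟩ :=
      Equiv.sumCompl_symm_apply_of_neg h
    simp only [Equiv.trans_apply, h1, Equiv.sumCongr_apply, Sum.map_inr,
      Equiv.sumCompl_apply_inr]
    have h2 := (e2 ⟨i, h⟩).property
    have hm2 : m₂ ((e2 ⟨i, h⟩ : {i // ¬ p₂ i}) : Fin t) = k := by
      rcases hb₂ ((e2 ⟨i, h⟩ : {i // ¬ p₂ i}) : Fin t) with hh | hh
      · exact hh
      · exact absurd hh h2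
    have hm1 : m₁ i = k := by
      rcases hb₁ i with hh | hh
      · exact hh
      · exact absurd hh h
    rw [hm2, hm1]


section Eigen
variable {n t : ℕ} (G : SimpleGraph (Fin n)) [DecidableRel G.Adj] (f : Fin n → Fin t)

/-- size of the `j`-th part -/
def fibCard (f : Fin n → Fin t) (j : Fin t) : ℕ := (Finset.univ.filter (fun v => f v = j)).card

lemma sum_fibCard : ∑ j, fibCard f j = n := by
  have := Finset.card_eq_sum_card_fiberwise (f := f) (s := Finset.univ) (t := Finset.univ)
    (fun x _ => Finset.mem_univ _)
  simpa [fibCard] using this.symm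

lemma fibCard_pos (hf : Function.Surjective f) (j : Fin t) : 1 ≤ fibCard f j := by
  obtain ⟨v, hv⟩ := hf j
  have : v ∈ Finset.univ.filter (fun v => f v = j) := by simp [hv]
  exact Finset.card_pos.mpr ⟨v, this⟩

variable (hadj : ∀ u v, G.Adj u v ↔ f u ≠ f v)

include hadj in
lemma nbrFinset_eq (v : Fin n) :
    G.neighborFinset v = Finset.univ.filter (fun u => ¬ f u = f v) := by
  ext u
  simp [SimpleGraph.mem_neighborFinset, hadj v u, ne_comm]

include hadj in
lemma degree_add (v : Fin n) : G.degree v + fibCard f (f v) = n := by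
  rw [← SimpleGraph.card_neighborFinset_eq_degree, nbrFinset_eq G f hadj v, fibCard, add_comm]
  rw [Finset.card_filter_add_card_filter_not (p := fun u => f u = f v)]
  simp

lemma Q_apply (x : Fin n → ℝ) (v : Fin n) :
    ((signlessLaplacian G).mulVec x) v
      = (G.degree v : ℝ) * x v + ∑ u ∈ G.neighborFinset v, x u := by
  rw [signlessLaplacian, Matrix.add_mulVec, Pi.add_apply, Matrix.mulVec_diagonal]
  simp
  congr!

include hadj in
lemma nbr_sum (x : Fin n → ℝ) (v : Fin n) :
    ∑ u ∈ G.neighborFinset v, x u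
      = (∑ u, x u) - ∑ u ∈ Finset.univ.filter (fun u => f u = f v), x u := by
  rw [nbrFinset_eq G f hadj v]
  have := Finset.sum_filter_add_sum_filter_not Finset.univ (fun u => f u = f v) x
  linarith

include hadj in
lemma eigen_fraction (hf : Function.Surjective f) (μ : ℝ) (x : Fin n → ℝ) (hx : x ≠ 0)
    (heig : (signlessLaplacian G).mulVec x = μ • x) (hμ : (n:ℝ) - 1 < μ) :
    ∑ j, (fibCard f j : ℝ)/((μ - n) + 2*(fibCard f j)) = 1 := by
  classical
  set M : Fin t → ℕ := fibCard f with hM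
  set S : ℝ := ∑ u, x u with hS
  set C : Fin t → ℝ := fun j => ∑ u ∈ Finset.univ.filter (fun u => f u = j), x u with hC
  have hdeg : ∀ v : Fin n, (G.degree v : ℝ) = (n : ℝ) - M (f v) := by
    intro v
    have := degree_add G f hadj v
    have : (G.degree v : ℝ) + (M (f v) : ℝ) = n := by exact_mod_cast this
    linarith
  have hper : ∀ v : Fin n, ((n:ℝ) - M (f v)) * x v + (S - C (f v)) = μ * x v := by
    intro v
    have h1 := congrFun heig v
    rw [Q_apply, nbr_sum G f hadj, hdeg v] at h1
    simpa using h1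
  have hpos1 : ∀ j, (0:ℝ) < μ - n + M j := by
    intro j
    have h1 : (1:ℝ) ≤ M j := by exact_mod_cast fibCard_pos f hf j
    linarith
  have hpos2 : ∀ j, (0:ℝ) < μ - n + 2*(M j) := by
    intro j
    have h1 : (1:ℝ) ≤ M j := by exact_mod_cast fibCard_pos f hf j
    linarith
  have hxv : ∀ v : Fin n, x v = (S - C (f v)) / (μ - n + M (f v)) := by
    intro v
    have h1 := hper v
    rw [eq_div_iff (ne_of_gt (hpos1 (f v)))]
    linarith
  have hCj : ∀ j, C j * (μ - n + 2*(M j)) = (M j) * S := by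
    intro j
    have h1 : C j = (M j : ℝ) * ((S - C j) / (μ - n + M j)) := by
      rw [hC]
      calc ∑ u ∈ Finset.univ.filter (fun u => f u = j), x u
          = ∑ u ∈ Finset.univ.filter (fun u => f u = j), (S - C j) / (μ - n + M j) := by
            apply Finset.sum_congr rfl
            intro u hu
            have hfu : f u = j := by simpa using hu
            rw [hxv u, hfu]
        _ = (M j : ℝ) * ((S - C j) / (μ - n + M j)) := by
            rw [Finset.sum_const, hM, fibCard, nsmul_eq_mul]
    have h2 := hpos1 j
    field_simp at h1
    nlinarith [h1]
  have hSC : S = ∑ j, C j := by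
    rw [hS, hC]
    exact (Finset.sum_fiberwise Finset.univ f x).symm
  by_cases hS0 : S = 0
  · exfalso
    have hC0 : ∀ j, C j = 0 := by
      intro j
      have := hCj j
      rw [hS0, mul_zero] at this
      exact (mul_eq_zero.mp this).resolve_right (ne_of_gt (hpos2 j))
    apply hx
    funext v
    have := hxv v
    rw [hS0, hC0 (f v)] at this
    simpa using this
  · have hCj2 : ∀ j, C j = S * ((M j : ℝ)/((μ - n) + 2*(M j))) := by
      intro j
      have h2 := hpos2 j
      have h3 : C j = ((M j : ℝ) * S)/(μ - n + 2*(M j)) := by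
        rw [eq_div_iff (ne_of_gt h2)]
        linarith [hCj j]
      rw [h3]
      ring
    have hsum1 : S = S * ∑ j, (M j : ℝ)/((μ - n) + 2*(M j)) := by
      rw [Finset.mul_sum]
      calc S = ∑ j, C j := hSC
        _ = ∑ j, S * ((M j : ℝ)/((μ - n) + 2*(M j))) :=
            Finset.sum_congr rfl fun j _ => hCj2 j
    have hres : S * (1:ℝ) = S * ∑ j, (M j : ℝ)/((μ - n) + 2*(M j)) := by
      rw [mul_one, ← hsum1]
    exact (mul_left_cancel₀ hS0 hres).symm

include hadj in
lemma balanced_eigenvec (hn : 0 < n) (cc : ℝ) (hcc : 0 < cc)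
    (hone : ∑ j, (fibCard f j : ℝ)/(cc + 2*(fibCard f j)) = 1) :
    ∃ x : Fin n → ℝ, x ≠ 0 ∧ (signlessLaplacian G).mulVec x = ((n:ℝ) + cc) • x := by
  classical
  set M : Fin t → ℕ := fibCard f with hM
  refine ⟨fun v => 1/(cc + 2*(M (f v))), ?_, ?_⟩
  · intro h0
    have hv := congrFun h0 ⟨0, hn⟩
    have hpos : (0:ℝ) < 1/(cc + 2*(M (f ⟨0, hn⟩) : ℝ)) := by positivity
    rw [hv] at hpos
    simp at hpos
  · funext v
    have hdeg : ∀ v : Fin n, (G.degree v : ℝ) = (n : ℝ) - M (f v) := by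
      intro v
      have := degree_add G f hadj v
      have : (G.degree v : ℝ) + (M (f v) : ℝ) = n := by exact_mod_cast this
      linarith
    have hCj : ∀ j, ∑ u ∈ Finset.univ.filter (fun u => f u = j), (1/(cc + 2*(M (f u) : ℝ)))
        = (M j : ℝ)/(cc + 2*(M j)) := by
      intro j
      calc ∑ u ∈ Finset.univ.filter (fun u => f u = j), (1/(cc + 2*(M (f u) : ℝ)))
          = ∑ u ∈ Finset.univ.filter (fun u => f u = j), (1/(cc + 2*(M j : ℝ))) := by
            apply Finset.sum_congr rfl
            intro u hu
            have hfu : f u = j := by simpa using hu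
            rw [hfu]
        _ = (M j : ℝ)/(cc + 2*(M j)) := by
            rw [Finset.sum_const, hM, fibCard, nsmul_eq_mul]
            ring
    have hSsum : ∑ u, (1/(cc + 2*(M (f u) : ℝ))) = 1 := by
      have h1 : ∑ u, (1/(cc + 2*(M (f u) : ℝ))) = ∑ j, (M j : ℝ)/(cc + 2*(M j)) := by
        rw [← Finset.sum_fiberwise Finset.univ f (fun u => 1/(cc + 2*(M (f u) : ℝ)))]
        exact Finset.sum_congr rfl fun j _ => hCj j
      rw [h1, hone]
    rw [Q_apply, nbr_sum G f hadj, hdeg v, hSsum, hCj (f v)]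
    have hd : (0:ℝ) < cc + 2*(M (f v)) := by positivity
    rw [Pi.smul_apply, smul_eq_mul]
    field_simp
    ring

end Eigen


section Glue
variable {n t k r : ℕ}

lemma balanced_identity (ht : 3 ≤ t) (hk : 1 ≤ k) :
    ((t:ℝ)-r)*((k:ℝ)/((turanBound t k r - ((t*k+r : ℕ) : ℝ))+2*k))
      + (r:ℝ)*(((k:ℝ)+1)/((turanBound t k r - ((t*k+r : ℕ) : ℝ))+2*k+2)) = 1 := by
  set c : ℝ := turanBound t k r - ((t*k+r : ℕ) : ℝ) with hc_def
  have hq := quad_c (t := t) (k := k) (r := r) ht hk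
  have hc := cpos (t := t) (k := k) (r := r) ht hk
  have d1 : (0:ℝ) < c + 2*k := by positivity
  have d2 : (0:ℝ) < c + 2*k + 2 := by positivity
  have hcast : ((t*k+r : ℕ) : ℝ) = (t:ℝ)*k + r := by push_cast; ring
  rw [hcast] at hq
  have hc2 : c = turanBound t k r - ((t:ℝ)*k + r) := by rw [← hcast]
  rw [← hc2] at hq
  rw [mul_div_assoc', mul_div_assoc', div_add_div _ _ (ne_of_gt d1) (ne_of_gt d2),
    div_eq_one_iff_eq (by positivity)]
  nlinarith [hq]

/-- residue map of the Turán graph -/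
def resMap (n t : ℕ) (ht : 0 < t) : Fin n → Fin t :=
  fun v => ⟨(v : ℕ) % t, Nat.mod_lt _ ht⟩

lemma resMap_adj (ht : 0 < t) (u v : Fin n) :
    (turanGraph n t).Adj u v ↔ resMap n t ht u ≠ resMap n t ht v := by
  simp [turanGraph, resMap, Fin.ext_iff]

lemma resMap_surj (ht : 0 < t) (htn : t ≤ n) : Function.Surjective (resMap n t ht) := by
  intro j
  refine ⟨⟨(j : ℕ), lt_of_lt_of_le j.isLt htn⟩, ?_⟩
  simp [resMap, Fin.ext_iff, Nat.mod_eq_of_lt j.isLt]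

lemma resMap_fibCard (ht : 0 < t) (hn : n = t*k + r) (hr : r < t) (j : Fin t) :
    fibCard (resMap n t ht) j = k + if (j:ℕ) < r then 1 else 0 := by
  rw [fibCard]
  have h1 : (Finset.univ.filter (fun v : Fin n => resMap n t ht v = j))
      = (Finset.univ.filter (fun v : Fin n => ((v:ℕ) % t = (j:ℕ)))) := by
    apply Finset.filter_congr
    intro v _
    simp [resMap, Fin.ext_iff]
  rw [h1, card_fin_filter_val n (fun x => x % t = (j:ℕ))]
  subst hn
  exact count_mod t k r (j:ℕ) hr j.isLt

lemma resMap_fibCard_bal (ht : 0 < t) (hn : n = t*k + r) (hr : r < t) (j : Fin t) :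
    fibCard (resMap n t ht) j = k ∨ fibCard (resMap n t ht) j = k+1 := by
  rw [resMap_fibCard ht hn hr j]
  split_ifs <;> simp

lemma iso_of_balanced (G : SimpleGraph (Fin n)) (f : Fin n → Fin t)
    (hadj : ∀ u v, G.Adj u v ↔ f u ≠ f v)
    (hbalf : ∀ j, fibCard f j = k ∨ fibCard f j = k+1)
    (hn : n = t*k + r) (hr : r < t) (ht : 0 < t) :
    Nonempty (G ≃g turanGraph n t) := by
  classical
  set g : Fin n → Fin t := resMap n t ht with hg
  have hbg : ∀ j, fibCard g j = k ∨ fibCard g j = k+1 := resMap_fibCard_bal ht hn hr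
  have hsum_f : ∑ j, fibCard f j = t*k + r := by rw [sum_fibCard, hn]
  have hsum_g : ∑ j, fibCard g j = t*k + r := by rw [sum_fibCard, hn]
  have hcard : ((Finset.univ : Finset (Fin t)).filter (fun i => fibCard f i = k+1)).card
      = ((Finset.univ : Finset (Fin t)).filter (fun i => fibCard g i = k+1)).card := by
    rw [big_count t k r (fibCard f) hsum_f hbalf hr, big_count t k r (fibCard g) hsum_g hbg hr]
  obtain ⟨σ, hσ⟩ := exists_sigma (fibCard f) (fibCard g) hbalf hbg hcard
  have hcards : ∀ j : Fin t,
      Fintype.card {v : Fin n // σ (f v) = j} = Fintype.card {v : Fin n // g v = j} := by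
    intro j
    have h1 : Fintype.card {v : Fin n // σ (f v) = j}
        = Fintype.card {v : Fin n // f v = σ.symm j} := by
      apply Fintype.card_congr
      apply Equiv.subtypeEquivRight
      intro v
      constructor
      · intro h; rw [← h]; exact (Equiv.symm_apply_apply σ (f v)).symm
      · intro h; rw [h]; exact Equiv.apply_symm_apply σ j
    rw [h1, Fintype.card_subtype, Fintype.card_subtype]
    show fibCard f (σ.symm j) = fibCard g j
    have := hσ (σ.symm j)
    rw [Equiv.apply_symm_apply] at this
    exact this.symm
  let e : Fin n ≃ Fin n :=
    Equiv.ofFiberEquiv (f := fun v => σ (f v)) (g := g)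
      (fun j => Fintype.equivOfCardEq (hcards j))
  have he : ∀ v, g (e v) = σ (f v) := fun v =>
    Equiv.ofFiberEquiv_map (fun j => Fintype.equivOfCardEq (hcards j)) v
  refine ⟨⟨e, ?_⟩⟩
  intro a b
  rw [resMap_adj ht (e a) (e b), ← hg, he a, he b, hadj a b]
  constructor
  · intro h hfe
    exact h (by rw [hfe])
  · intro h hs
    exact h (σ.injective hs)

lemma balanced_of_iso (G : SimpleGraph (Fin n)) (e : G ≃g turanGraph n t)
    (hn : n = t*k + r) (hr : r < t) (ht : 0 < t) (htn : t ≤ n) :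
    ∃ f' : Fin n → Fin t, Function.Surjective f' ∧ (∀ u v, G.Adj u v ↔ f' u ≠ f' v) ∧
      ∀ j, fibCard f' j = k ∨ fibCard f' j = k+1 := by
  classical
  set g : Fin n → Fin t := resMap n t ht with hg
  refine ⟨fun v => g (e v), ?_, ?_, ?_⟩
  · exact (resMap_surj ht htn).comp e.toEquiv.surjective
  · intro u v
    rw [← e.map_rel_iff]
    exact resMap_adj ht (e u) (e v)
  · intro j
    have h1 : fibCard (fun v => g (e v)) j = fibCard g j := by
      rw [fibCard, fibCard, ← Fintype.card_subtype, ← Fintype.card_subtype]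
      apply Fintype.card_congr
      exact e.toEquiv.subtypeEquiv (fun v => by simp)
    rw [h1]
    exact resMap_fibCard_bal ht hn hr j

end Glue

theorem q1_completeMultipartite_le (n t k r : ℕ) (G : SimpleGraph (Fin n))
    (hG : IsCompleteMultipartite' G t) (ht : 3 ≤ t) (hn : n = t * k + r) (hr : r < t) :
    q1 G ≤ turanBound t k r ∧
      (q1 G = turanBound t k r ↔ Nonempty (G ≃g turanGraph n t)) := by
  classical
  obtain ⟨f, hf, hadj⟩ := hG
  have htn : t ≤ n := by
    have := Fintype.card_le_of_surjective f hf
    simpa using this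
  have ht0 : 0 < t := by omega
  have hk : 1 ≤ k := by
    rcases Nat.eq_zero_or_pos k with h | h
    · subst h; simp at hn; omega
    · exact h
  have hn0 : 0 < n := by omega
  set c : ℝ := turanBound t k r - ((t*k+r : ℕ) : ℝ) with hc_def
  have hc : 0 < c := cpos ht hk
  have hncast : ((t*k+r : ℕ) : ℝ) = (n:ℝ) := by rw [hn]
  have hTB : turanBound t k r = (n:ℝ) + c := by rw [hc_def, hncast]; ring
  have hbal : ((t:ℝ)-r)*((k:ℝ)/(c+2*k)) + (r:ℝ)*(((k:ℝ)+1)/(c+2*k+2)) = 1 :=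
    balanced_identity ht hk
  have hsum_f : ∑ j, fibCard f j = t*k + r := by rw [sum_fibCard, hn]
  -- Part 1 : upper bound on every eigenvalue
  have hub : ∀ μ ∈ {μ : ℝ | ∃ x : Fin n → ℝ, x ≠ 0 ∧ (signlessLaplacian G).mulVec x = μ • x},
      μ ≤ (n:ℝ) + c := by
    rintro μ ⟨x, hx, heig⟩
    by_contra hcon
    push_neg at hcon
    have hμn : (n:ℝ) - 1 < μ := by linarith
    have h1 := eigen_fraction G f hadj hf μ x hx heig hμn
    have h2 := (sum_h_le hc (fibCard f) hsum_f hbal).1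
    have h3 : ∑ j, (fibCard f j : ℝ)/((μ - n) + 2*(fibCard f j))
        < ∑ j, (fibCard f j : ℝ)/(c + 2*(fibCard f j)) := by
      apply Finset.sum_lt_sum_of_nonempty
      · exact Finset.univ_nonempty_iff.mpr ⟨⟨0, ht0⟩⟩
      · intro j _
        have hm : (1:ℝ) ≤ (fibCard f j : ℝ) := by exact_mod_cast fibCard_pos f hf j
        apply div_lt_div_of_pos_left (by linarith) (by linarith) (by linarith)
    linarith
  have hq1le : q1 G ≤ turanBound t k r := by
    rw [q1, hTB]
    apply Real.sSup_le hub
    have : (0:ℝ) ≤ n := Nat.cast_nonneg n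
    linarith
  refine ⟨hq1le, ?_, ?_⟩
  · -- q1 = bound → iso
    intro heq
    have hSne : {μ : ℝ | ∃ x : Fin n → ℝ, x ≠ 0 ∧
        (signlessLaplacian G).mulVec x = μ • x}.Nonempty := by
      by_contra hemp
      rw [Set.not_nonempty_iff_eq_empty] at hemp
      rw [q1, hemp, Real.sSup_empty] at heq
      have : (0:ℝ) ≤ n := Nat.cast_nonneg n
      rw [hTB] at heq
      linarith
    have hfin := spec_finite (signlessLaplacian G)
    have hmem : q1 G ∈ {μ : ℝ | ∃ x : Fin n → ℝ, x ≠ 0 ∧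
        (signlessLaplacian G).mulVec x = μ • x} := hSne.csSup_mem hfin
    rw [heq] at hmem
    obtain ⟨x, hx, heig⟩ := hmem
    have hμn : (n:ℝ) - 1 < turanBound t k r := by rw [hTB]; linarith
    have h1 := eigen_fraction G f hadj hf (turanBound t k r) x hx heig hμn
    have hms : turanBound t k r - (n:ℝ) = c := by rw [hTB]; ring
    rw [hms] at h1
    have hbalf := (sum_h_le hc (fibCard f) hsum_f hbal).2.mp h1
    exact iso_of_balanced G f hadj hbalf hn hr ht0
  · -- iso → q1 = bound
    rintro ⟨e⟩
    obtain ⟨f', hf', hadj', hbalf'⟩ := balanced_of_iso G e hn hr ht0 htn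
    have hsum' : ∑ j, fibCard f' j = t*k + r := by rw [sum_fibCard, hn]
    have hone : ∑ j, (fibCard f' j : ℝ)/(c + 2*(fibCard f' j)) = 1 :=
      (sum_h_le hc (fibCard f') hsum' hbal).2.mpr hbalf'
    obtain ⟨x, hx, heig⟩ := balanced_eigenvec G f' hadj' hn0 c hc hone
    have hmem : ((n:ℝ) + c) ∈ {μ : ℝ | ∃ x : Fin n → ℝ, x ≠ 0 ∧
        (signlessLaplacian G).mulVec x = μ • x} := ⟨x, hx, heig⟩
    have hbdd : BddAbove {μ : ℝ | ∃ x : Fin n → ℝ, x ≠ 0 ∧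
        (signlessLaplacian G).mulVec x = μ • x} := ⟨(n:ℝ) + c, hub⟩
    have hge : (n:ℝ) + c ≤ q1 G := le_csSup hbdd hmem
    rw [hTB]
    rw [hTB] at hq1le
    exact le_antisymm hq1le hge
end

section
/- For every n and every t with 2 ≤ t ≤ n−1, the signless Laplacian spectral radius of the Turán graph satisfies q₁(T_{n,t}) < q₁(T_{n,t+1}). -/
open SimpleGraph

namespace TuranAux

open Finset

section spec
variable {V : Type*} [Fintype V] [DecidableEq V]

lemma sL_nonneg (G : SimpleGraph V) (v w : V) : 0 ≤ signlessLaplacian G v w := by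
  classical
  simp only [signlessLaplacian, Matrix.add_apply, Matrix.diagonal_apply]
  have : (0:ℝ) ≤ G.adjMatrix ℝ v w := by
    by_cases h : G.Adj v w <;> simp [h]
  split_ifs <;> positivity

lemma sL_symm (G : SimpleGraph V) (v w : V) :
    signlessLaplacian G v w = signlessLaplacian G w v := by
  classical
  simp only [signlessLaplacian, Matrix.add_apply, Matrix.diagonal_apply]
  by_cases h : v = w
  · subst h; rfl
  · rw [if_neg h, if_neg (Ne.symm h)]
    by_cases ha : G.Adj v w
    · rw [SimpleGraph.adjMatrix_apply, SimpleGraph.adjMatrix_apply, if_pos ha, if_pos ha.symm]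
    · rw [SimpleGraph.adjMatrix_apply, SimpleGraph.adjMatrix_apply, if_neg ha,
        if_neg (fun hc => ha hc.symm)]

lemma q1_eq_of_pos_eigenvector [Nonempty V] (G : SimpleGraph V) (x : V → ℝ)
    (hx : ∀ v, 0 < x v) (lam : ℝ)
    (h : (signlessLaplacian G).mulVec x = lam • x) : q1 G = lam := by
  classical
  set Q := signlessLaplacian G with hQ
  apply IsGreatest.csSup_eq
  constructor
  · exact ⟨x, fun h0 => (hx (Classical.arbitrary V)).ne'
      (by rw [h0]; rfl), h⟩
  · rintro μ ⟨y, hy0, hy⟩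
    set z : V → ℝ := fun v => |y v| with hz
    have hzQ : ∀ v, |μ| * z v ≤ Q.mulVec z v := by
      intro v
      have h1 : |μ| * z v = |(Q.mulVec y) v| := by
        rw [hy]; simp [hz, abs_mul]
      rw [h1]
      calc |(Q.mulVec y) v| ≤ ∑ w, |Q v w * y w| := by
            exact Finset.abs_sum_le_sum_abs _ _
        _ = ∑ w, Q v w * z w := by
            apply Finset.sum_congr rfl
            intro w _
            rw [abs_mul, abs_of_nonneg (sL_nonneg G v w)]
        _ = Q.mulVec z v := rfl
    -- pair with x
    have hs : ∀ v w, Q v w = Q w v := fun v w => by rw [hQ]; exact sL_symm G v w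
    have hsym : ∑ v, x v * Q.mulVec z v = ∑ v, Q.mulVec x v * z v := by
      simp only [Matrix.mulVec, dotProduct]
      calc ∑ v, x v * ∑ w, Q v w * z w
          = ∑ v, ∑ w, x v * (Q v w * z w) := by
            apply Finset.sum_congr rfl; intros; rw [Finset.mul_sum]
        _ = ∑ w, ∑ v, x v * (Q v w * z w) := Finset.sum_comm
        _ = ∑ w, (∑ v, Q w v * x v) * z w := by
            apply Finset.sum_congr rfl; intro w _
            rw [Finset.sum_mul]; apply Finset.sum_congr rfl; intro v _
            rw [hs v w]; ring
    have hxz : 0 < ∑ v, x v * z v := by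
      obtain ⟨v, hv⟩ : ∃ v, y v ≠ 0 := by
        by_contra hc
        push_neg at hc
        exact hy0 (funext hc)
      apply Finset.sum_pos'
      · intro i _
        exact mul_nonneg (hx i).le (abs_nonneg _)
      · exact ⟨v, Finset.mem_univ v, mul_pos (hx v) (abs_pos.2 hv)⟩
    have hle : |μ| * ∑ v, x v * z v ≤ lam * ∑ v, x v * z v := by
      calc |μ| * ∑ v, x v * z v = ∑ v, x v * (|μ| * z v) := by
            rw [Finset.mul_sum]; apply Finset.sum_congr rfl; intros; ring
        _ ≤ ∑ v, x v * Q.mulVec z v := by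
            apply Finset.sum_le_sum
            intro i _
            exact mul_le_mul_of_nonneg_left (hzQ i) (hx i).le
        _ = ∑ v, Q.mulVec x v * z v := hsym
        _ = lam * ∑ v, x v * z v := by
            rw [h, Finset.mul_sum]
            apply Finset.sum_congr rfl
            intros; simp [mul_comm, mul_assoc, mul_left_comm]
    have : |μ| ≤ lam := le_of_mul_le_mul_right (by linarith [hle]) hxz
    exact le_trans (le_abs_self μ) this
end spec

lemma card_mod_filter (n t i : ℕ) (ht : 0 < t) (hi : i < t) :
    ((Finset.univ : Finset (Fin n)).filter (fun w : Fin n => (w : ℕ) % t = i)).card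
      = n / t + if i < n % t then 1 else 0 := by
  classical
  set k := n / t with hk
  set r := n % t with hr
  have hnkr : n = t * k + r := (Nat.div_add_mod n t).symm ▸ by omega
  have hrt : r < t := Nat.mod_lt _ ht
  set m := k + if i < r then 1 else 0 with hm
  have key : ∀ q : ℕ, q * t + i < n ↔ q < m := by
    intro q
    constructor
    · intro h
      by_contra hq
      push_neg at hq
      split_ifs at hm with hir
      · have : (k+1) * t + i ≤ q * t + i := by
          have := Nat.mul_le_mul_right t (show k+1 ≤ q by omega)
          omega
        nlinarith [hnkr, hrt]
      · have : k * t + i ≤ q * t + i := by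
          have := Nat.mul_le_mul_right t (show k ≤ q by omega)
          omega
        push_neg at hir
        nlinarith [hnkr]
    · intro h
      split_ifs at hm with hir
      · have hq : q ≤ k := by omega
        have : q * t + i ≤ k * t + i := by
          have := Nat.mul_le_mul_right t hq
          omega
        nlinarith [hnkr]
      · push_neg at hir
        have hq : q + 1 ≤ k := by omega
        have : (q+1) * t ≤ k * t := Nat.mul_le_mul_right t hq
        nlinarith [hnkr]
  have step1 : ((Finset.univ : Finset (Fin n)).filter (fun w : Fin n => (w : ℕ) % t = i)).card
      = ((Finset.range n).filter (fun w => w % t = i)).card := by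
    rw [Finset.card_filter, Finset.card_filter]
    exact Fin.sum_univ_eq_sum_range (fun j => if j % t = i then 1 else 0) n
  have step2 : (Finset.range n).filter (fun w => w % t = i)
      = (Finset.range m).image (fun q => q * t + i) := by
    ext x
    simp only [Finset.mem_filter, Finset.mem_range, Finset.mem_image]
    constructor
    · rintro ⟨hx, hmod⟩
      have hdm := Nat.div_add_mod x t
      have hc : (x / t) * t = t * (x / t) := Nat.mul_comm _ _
      refine ⟨x / t, (key _).1 (by omega), by omega⟩
    · rintro ⟨q, hq, rfl⟩
      refine ⟨(key q).2 hq, ?_⟩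
      rw [Nat.add_comm, Nat.add_mul_mod_self_right, Nat.mod_eq_of_lt hi]
  have step3 : ((Finset.range m).image (fun q => q * t + i)).card = m := by
    rw [Finset.card_image_of_injective _ (fun a b hab =>
      Nat.eq_of_mul_eq_mul_right ht (by omega : a * t = b * t)), Finset.card_range]
  rw [step1, step2, step3, hm]

noncomputable def tK (n t : ℕ) : ℝ := ((n / t : ℕ) : ℝ)
noncomputable def tR (n t : ℕ) : ℝ := ((n % t : ℕ) : ℝ)
noncomputable def tAl (n t : ℕ) : ℝ := (n : ℝ) - 2 * tK n t - 2
noncomputable def tBe (n t : ℕ) : ℝ := (n : ℝ) - 2 * tK n t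
noncomputable def tX (n t : ℕ) (lam : ℝ) : Fin n → ℝ :=
  fun v => if (v : ℕ) % t < n % t then lam - tBe n t else lam - tAl n t

lemma turan_eigen (n t : ℕ) (ht : 0 < t) (lam : ℝ)
    (Feq : (lam - tAl n t) * (lam - tBe n t) =
      tR n t * (tK n t + 1) * (lam - tBe n t)
        + ((t : ℝ) - tR n t) * tK n t * (lam - tAl n t)) :
    (signlessLaplacian (turanGraph n t)).mulVec (tX n t lam) = lam • tX n t lam := by
  classical
  funext v
  set i := (v : ℕ) % t with hidef
  have hit : i < t := Nat.mod_lt _ ht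
  -- sum over all vertices
  have hS : ∑ w : Fin n, tX n t lam w
      = tR n t * (tK n t + 1) * (lam - tBe n t)
        + ((t : ℝ) - tR n t) * tK n t * (lam - tAl n t) := by
    rw [← Finset.sum_fiberwise_of_maps_to (g := fun w : Fin n => (w : ℕ) % t)
        (t := Finset.range t) (fun w _ => Finset.mem_range.2 (Nat.mod_lt _ ht))]
    have hfib : ∀ j ∈ Finset.range t,
        ∑ w ∈ Finset.univ.filter (fun w : Fin n => (w : ℕ) % t = j), tX n t lam w
        = (if j < n % t then (tK n t + 1) * (lam - tBe n t) else tK n t * (lam - tAl n t)) := by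
      intro j hj
      have hconst : ∀ w ∈ Finset.univ.filter (fun w : Fin n => (w : ℕ) % t = j),
          tX n t lam w = (if j < n % t then lam - tBe n t else lam - tAl n t) := by
        intro w hw
        rw [Finset.mem_filter] at hw
        rw [tX]
        simp only [hw.2]
      rw [Finset.sum_congr rfl hconst, Finset.sum_const,
        card_mod_filter n t j ht (Finset.mem_range.1 hj), nsmul_eq_mul]
      by_cases hjr : j < n % t
      · rw [if_pos hjr, if_pos hjr, if_pos hjr, tK]
        push_cast
        ring
      · rw [if_neg hjr, if_neg hjr, if_neg hjr, tK]
        push_cast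
        ring
    rw [Finset.sum_congr rfl hfib]
    have hsplit : (Finset.range t).filter (fun j => j < n % t) = Finset.range (n % t) := by
      ext j
      simp only [Finset.mem_filter, Finset.mem_range]
      have := Nat.mod_lt n ht
      omega
    rw [Finset.sum_ite, hsplit, Finset.sum_const, Finset.sum_const, Finset.card_range,
      nsmul_eq_mul, nsmul_eq_mul]
    have hcard2 : (((Finset.range t).filter (fun j => ¬ j < n % t)).card : ℝ)
        = (t : ℝ) - tR n t := by
      have h1 := Finset.card_filter_add_card_filter_not
        (s := Finset.range t) (p := fun j => j < n % t)
      rw [Finset.card_range] at h1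
      have h2 : ((Finset.range t).filter (fun j => j < n % t)).card = n % t := by
        rw [hsplit, Finset.card_range]
      rw [tR]
      have h3 : ((Finset.range t).filter (fun j => ¬ j < n % t)).card = t - n % t := by omega
      rw [h3]
      have : n % t ≤ t := Nat.le_of_lt (Nat.mod_lt _ ht)
      push_cast [this]
      ring
    rw [hcard2, tR]
    ring
  -- the matrix entry computation
  rw [signlessLaplacian]
  rw [Matrix.add_mulVec, Pi.add_apply, Matrix.mulVec_diagonal,
    SimpleGraph.adjMatrix_mulVec_apply, SimpleGraph.degree, neighborFinset_eq_filter,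
    Finset.filter_congr_decidable]
  have hfil : Finset.filter (fun w => (turanGraph n t).Adj v w) Finset.univ
      = Finset.filter (fun w : Fin n => ¬ ((w : ℕ) % t = i)) Finset.univ := by
    apply Finset.filter_congr
    intro w _
    have hadj : (turanGraph n t).Adj v w ↔ ¬ ((v : ℕ) % t = (w : ℕ) % t) := Iff.rfl
    rw [hadj, ← hidef]
    constructor
    · intro h heq
      exact h heq.symm
    · intro h heq
      exact h heq.symm
  rw [hfil]
  have hcompl := Finset.card_filter_add_card_filter_not
    (s := (Finset.univ : Finset (Fin n))) (p := fun w : Fin n => (w : ℕ) % t = i)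
  rw [Finset.card_univ, Fintype.card_fin] at hcompl
  have hc : ((Finset.univ : Finset (Fin n)).filter (fun w : Fin n => (w : ℕ) % t = i)).card
      = n / t + if i < n % t then 1 else 0 := card_mod_filter n t i ht hit
  have hsame : ∑ w ∈ (Finset.univ : Finset (Fin n)).filter (fun w : Fin n => (w : ℕ) % t = i),
      tX n t lam w
      = (((Finset.univ : Finset (Fin n)).filter (fun w : Fin n => (w : ℕ) % t = i)).card : ℝ)
        * tX n t lam v := by
    rw [Finset.sum_congr rfl (fun w hw => ?_), Finset.sum_const, nsmul_eq_mul]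
    rw [Finset.mem_filter] at hw
    show tX n t lam w = tX n t lam v
    simp only [tX, hw.2, ← hidef]
  have hsplit2 := Finset.sum_filter_add_sum_filter_not
    (Finset.univ : Finset (Fin n)) (fun w : Fin n => (w : ℕ) % t = i) (tX n t lam)
  have hxv : tX n t lam v = if i < n % t then lam - tBe n t else lam - tAl n t := by
    rw [tX, ← hidef]
  have hcast : ((((Finset.univ : Finset (Fin n)).filter
      (fun w : Fin n => ¬ (w : ℕ) % t = i)).card : ℕ) : ℝ)
      = (n : ℝ) - (((n / t + if i < n % t then 1 else 0 : ℕ)) : ℝ) := by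
    rw [hc] at hcompl
    have hle : (n / t + if i < n % t then 1 else 0) ≤ n := by omega
    have : ((Finset.univ : Finset (Fin n)).filter
      (fun w : Fin n => ¬ (w : ℕ) % t = i)).card = n - (n / t + if i < n % t then 1 else 0) := by
      omega
    rw [this]
    push_cast [hle]
    ring
  rw [Pi.smul_apply, smul_eq_mul]
  have hrest : ∑ w ∈ (Finset.univ : Finset (Fin n)).filter (fun w : Fin n => ¬ (w : ℕ) % t = i),
      tX n t lam w = (∑ w : Fin n, tX n t lam w)
        - (((Finset.univ : Finset (Fin n)).filter
            (fun w : Fin n => (w : ℕ) % t = i)).card : ℝ) * tX n t lam v := by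
    rw [← hsame]
    linarith [hsplit2]
  by_cases hir : i < n % t
  · simp only [if_pos hir] at hcast hc hxv
    rw [hrest, hS, hcast, hc, hxv]
    simp only [tK, tR, tAl, tBe] at Feq ⊢
    push_cast
    push_cast at Feq
    linear_combination -Feq
  · simp only [if_neg hir] at hcast hc hxv
    rw [hrest, hS, hcast, hc, hxv]
    simp only [tK, tR, tAl, tBe] at Feq ⊢
    push_cast
    push_cast at Feq
    linear_combination -Feq

noncomputable def qB (n t : ℕ) : ℝ := 3 * (n : ℝ) - 4 * tK n t - 2
noncomputable def qC (n t : ℕ) : ℝ :=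
  tAl n t * tBe n t + tR n t * (tK n t + 1) * tBe n t + ((t : ℝ) - tR n t) * tK n t * tAl n t
noncomputable def qD (n t : ℕ) : ℝ := qB n t ^ 2 - 4 * qC n t
noncomputable def qlam (n t : ℕ) : ℝ := (qB n t + Real.sqrt (qD n t)) / 2

lemma ncast (n t : ℕ) : (t : ℝ) * tK n t + tR n t = (n : ℝ) := by
  rw [tK, tR]
  exact_mod_cast congrArg (Nat.cast : ℕ → ℝ) (Nat.div_add_mod n t)

lemma tK_ge_one (n t : ℕ) (ht : 0 < t) (htn : t ≤ n) : (1 : ℝ) ≤ tK n t := by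
  rw [tK]
  have : 1 ≤ n / t := (Nat.one_le_div_iff ht).2 htn
  exact_mod_cast this

lemma tR_lt (n t : ℕ) (ht : 0 < t) : tR n t < (t : ℝ) := by
  rw [tR]; exact_mod_cast Nat.mod_lt _ ht

lemma tR_nonneg (n t : ℕ) : 0 ≤ tR n t := by rw [tR]; positivity

lemma qD_pos (n t : ℕ) (ht : 0 < t) (htn : t ≤ n) : 0 < qD n t := by
  have h1 := tK_ge_one n t ht htn
  have h2 := tR_lt n t ht
  have hn := ncast n t
  have key : qD n t = (2 * tBe n t - qB n t) ^ 2 + 8 * tK n t * ((t : ℝ) - tR n t) := by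
    simp only [qD, qB, qC, tAl, tBe] at hn ⊢
    linear_combination (8 * tK n t - 4 * (n:ℝ)) * hn
  nlinarith [sq_nonneg (2 * tBe n t - qB n t)]

lemma qlam_root (n t : ℕ) (ht : 0 < t) (htn : t ≤ n) :
    qlam n t ^ 2 - qB n t * qlam n t + qC n t = 0 := by
  have hD := qD_pos n t ht htn
  have hs : Real.sqrt (qD n t) ^ 2 = qD n t := Real.sq_sqrt hD.le
  have hs2 : Real.sqrt (qD n t) ^ 2 = qB n t ^ 2 - 4 * qC n t := hs
  rw [qlam]
  linear_combination hs2 / 4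

lemma qlam_gt_tBe (n t : ℕ) (ht : 0 < t) (htn : t ≤ n) : tBe n t < qlam n t := by
  have h1 := tK_ge_one n t ht htn
  have h2 := tR_lt n t ht
  have hn := ncast n t
  have hD := qD_pos n t ht htn
  have hs : Real.sqrt (qD n t) ^ 2 = qD n t := Real.sq_sqrt hD.le
  have hs0 : 0 ≤ Real.sqrt (qD n t) := Real.sqrt_nonneg _
  have key : qD n t = (2 * tBe n t - qB n t) ^ 2 + 8 * tK n t * ((t : ℝ) - tR n t) := by
    simp only [qD, qB, qC, tAl, tBe] at hn ⊢
    linear_combination (8 * tK n t - 4 * (n:ℝ)) * hn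
  rw [qlam]
  nlinarith [hs, hs0, key, sq_nonneg (Real.sqrt (qD n t) - (2 * tBe n t - qB n t))]

lemma qlam_ge_n (n t : ℕ) (h2 : 2 ≤ t) (htn : t ≤ n) : (n : ℝ) ≤ qlam n t := by
  have ht : 0 < t := by omega
  have h1 := tK_ge_one n t ht htn
  have hn := ncast n t
  have hD := qD_pos n t ht htn
  have hs : Real.sqrt (qD n t) ^ 2 = qD n t := Real.sq_sqrt hD.le
  have hs0 : 0 ≤ Real.sqrt (qD n t) := Real.sqrt_nonneg _
  have hFn : (n:ℝ)^2 - qB n t * n + qC n t = 2 * tK n t * (tK n t + 1) * (2 - (t:ℝ)) := by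
    simp only [qB, qC, tAl, tBe] at hn ⊢
    linear_combination (n:ℝ) * hn
  have hFn_le : (n:ℝ)^2 - qB n t * n + qC n t ≤ 0 := by
    have h2' : (2:ℝ) ≤ t := by exact_mod_cast h2
    have h3 : 0 ≤ (2 * tK n t * (tK n t + 1)) * ((t:ℝ) - 2) :=
      mul_nonneg (by nlinarith) (by linarith)
    rw [hFn]; linarith
  by_contra hcon
  push_neg at hcon
  rw [qlam] at hcon
  have hs2 : Real.sqrt (qD n t) ^ 2 = qB n t ^ 2 - 4 * qC n t := hs
  have hu : 0 < (n:ℝ) - (qB n t + Real.sqrt (qD n t))/2 := by linarith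
  have hu2 : 0 < (n:ℝ) - (qB n t - Real.sqrt (qD n t))/2 := by linarith
  have hp := mul_pos hu2 hu
  have hexp : ((n:ℝ) - (qB n t - Real.sqrt (qD n t))/2) * ((n:ℝ) - (qB n t + Real.sqrt (qD n t))/2)
      = (n:ℝ)^2 - qB n t * n + qC n t := by
    linear_combination -hs2/4
  linarith [hp, hexp.trans_le hFn_le]

noncomputable def hfun (c : ℝ) (s : ℕ) : ℝ := (s : ℝ) / (c + 2 * s)

noncomputable def Gsum (n m : ℕ) (c : ℝ) : ℝ :=
  (↑(n % m)) * hfun c (n / m + 1) + ((m : ℝ) - ↑(n % m)) * hfun c (n / m)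

lemma hfun_zero (c : ℝ) : hfun c 0 = 0 := by simp [hfun]

lemma hfun_delta (c : ℝ) (hc : 0 ≤ c) (j : ℕ) (hj : 1 ≤ j) :
    hfun c (j + 1) - hfun c j = c / ((c + 2 * j) * (c + 2 * j + 2)) := by
  have hj1 : (1 : ℝ) ≤ (j : ℝ) := by exact_mod_cast hj
  have h1 : (0:ℝ) < c + 2 * j := by linarith
  have h2 : (0:ℝ) < c + 2 * j + 2 := by linarith
  rw [hfun, hfun]
  push_cast
  field_simp
  ring

lemma delta_nonneg (c : ℝ) (hc : 0 ≤ c) (j : ℕ) :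
    0 ≤ hfun c (j + 1) - hfun c j := by
  rcases Nat.eq_zero_or_pos j with rfl | hj
  · rw [hfun_zero, hfun, sub_zero]
    push_cast
    apply div_nonneg (by norm_num) (by linarith)
  · rw [hfun_delta c hc j hj]
    have hj1 : (1 : ℝ) ≤ (j : ℝ) := by exact_mod_cast hj
    apply div_nonneg hc (by nlinarith)

lemma delta_strict0 (c : ℝ) (hc : 0 ≤ c) :
    hfun c (0 + 2) - hfun c (0 + 1) < hfun c (0 + 1) - hfun c 0 := by
  rw [hfun_zero, hfun, hfun]
  push_cast
  have h1 : (0:ℝ) < c + 2 := by linarith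
  have h2 : (0:ℝ) < c + 4 := by linarith
  have key : 1/(c+2) - (2/(c+4) - 1/(c+2)) = 4/((c+2)*(c+4)) := by
    field_simp
    ring
  have hpos : (0:ℝ) < 4/((c+2)*(c+4)) := by positivity
  have e1 : c + 2 * (1:ℝ) = c + 2 := by ring
  have e2 : c + 2 * (2:ℝ) = c + 4 := by ring
  rw [e1, e2]
  linarith

lemma delta_antitone (c : ℝ) (hc : 0 ≤ c) (j : ℕ) :
    hfun c (j + 2) - hfun c (j + 1) ≤ hfun c (j + 1) - hfun c j := by
  rcases Nat.eq_zero_or_pos j with rfl | hj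
  · exact (delta_strict0 c hc).le
  · rw [hfun_delta c hc j hj, show j + 2 = (j+1) + 1 from rfl,
      hfun_delta c hc (j+1) (by omega)]
    have hj1 : (1 : ℝ) ≤ (j : ℝ) := by exact_mod_cast hj
    have h1 : (0:ℝ) < (c + 2*(j:ℝ)) * (c + 2*(j:ℝ) + 2) := by nlinarith
    have h3 : (c + 2*(j:ℝ)) * (c + 2*(j:ℝ) + 2) ≤ (c + 2*((j:ℝ)+1)) * (c + 2*((j:ℝ)+1) + 2) := by
      nlinarith
    push_cast
    exact div_le_div_of_nonneg_left hc h1 h3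

lemma byparts (δ P : ℕ → ℝ) (N : ℕ) (h0 : P 0 = 0) :
    ∑ j ∈ Finset.range N, δ j * (P (j+1) - P j)
      = ∑ j ∈ Finset.range N, P (j+1) * (δ j - δ (j+1)) + δ N * P N := by
  induction N with
  | zero => simp [h0]
  | succ N ih => rw [Finset.sum_range_succ, Finset.sum_range_succ (f := fun j => P (j+1) * (δ j - δ (j+1))), ih]; ring

lemma sumII (n m : ℕ) (c : ℝ) (hm : 2 ≤ m) (hmn : m ≤ n) :
    ∑ j ∈ Finset.range n, (hfun c (j+1) - hfun c j) * ((min n (m*(j+1)) : ℕ) - ((min n (m*j) : ℕ) : ℝ))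
      = Gsum n m c := by
  have hm0 : 0 < m := by omega
  set k := n / m with hk
  set r := n % m with hr
  have hmod : m * k + r = n := Nat.div_add_mod n m
  have hrm : r < m := Nat.mod_lt _ hm0
  have hk1n : k + 1 ≤ n := by
    have h1 : k ≤ n / 2 := by
      rw [hk]
      exact Nat.div_le_div_left hm (by norm_num)
    have h2 : n / 2 * 2 ≤ n := Nat.div_mul_le_self n 2
    omega
  rw [← Finset.sum_range_add_sum_Ico _ hk1n]
  have hico : ∑ j ∈ Finset.Ico (k+1) n,
      (hfun c (j+1) - hfun c j) * ((min n (m*(j+1)) : ℕ) - ((min n (m*j) : ℕ) : ℝ)) = 0 := by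
    apply Finset.sum_eq_zero
    intro j hj
    rw [Finset.mem_Ico] at hj
    have h1 : min n (m*j) = n := by
      have : n ≤ m * j := by
        calc n = m * k + r := hmod.symm
        _ ≤ m * k + m := by omega
        _ = m * (k+1) := by ring
        _ ≤ m * j := Nat.mul_le_mul_left m hj.1
      omega
    have h2 : min n (m*(j+1)) = n := by
      have : m * j ≤ m * (j+1) := Nat.mul_le_mul_left m (by omega)
      omega
    rw [h1, h2]
    ring
  rw [hico, add_zero, Finset.sum_range_succ]
  have hterm : ∀ j < k, (hfun c (j+1) - hfun c j) * ((min n (m*(j+1)) : ℕ) - ((min n (m*j) : ℕ) : ℝ))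
      = (hfun c (j+1) - hfun c j) * m := by
    intro j hj
    have h1 : m * (j + 1) ≤ n := by
      calc m * (j+1) ≤ m * k := Nat.mul_le_mul_left m (by omega)
      _ ≤ m * k + r := by omega
      _ = n := hmod
    have h2 : m * j ≤ n := le_trans (Nat.mul_le_mul_left m (by omega)) h1
    rw [min_eq_right h1, min_eq_right h2]
    have : ((m * (j+1) : ℕ) : ℝ) - ((m * j : ℕ) : ℝ) = m := by push_cast; ring
    rw [this]
  rw [Finset.sum_congr rfl (fun j hj => hterm j (Finset.mem_range.1 hj))]
  have hsum : ∑ j ∈ Finset.range k, (hfun c (j+1) - hfun c j) * m = hfun c k * m := by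
    rw [← Finset.sum_mul, Finset.sum_range_sub (fun j => hfun c j), hfun_zero, sub_zero]
  rw [hsum]
  have hminkn : min n (m * k) = m * k := min_eq_right (by omega)
  have hmink1 : min n (m * (k+1)) = n := by
    have : n ≤ m * (k+1) := by nlinarith [hmod]
    omega
  rw [hminkn, hmink1]
  have hcast : ((n:ℕ):ℝ) - ((m*k : ℕ):ℝ) = (r : ℝ) := by
    push_cast
    have : (m:ℝ) * k + r = n := by exact_mod_cast hmod
    linarith
  rw [hcast, Gsum, ← hk, ← hr]
  ring

lemma Gsum_mono (n m : ℕ) (c : ℝ) (hc : 0 ≤ c) (hm : 2 ≤ m) (hmn : m + 1 ≤ n) :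
    Gsum n m c < Gsum n (m+1) c := by
  rw [← sumII n m c hm (by omega), ← sumII n (m+1) c (by omega) (by omega)]
  rw [byparts (fun j => hfun c (j+1) - hfun c j) (fun j => ((min n (m*j) : ℕ) : ℝ)) n (by simp),
    byparts (fun j => hfun c (j+1) - hfun c j) (fun j => ((min n ((m+1)*j) : ℕ) : ℝ)) n (by simp)]
  have hbound : ((min n (m*n) : ℕ) : ℝ) = ((min n ((m+1)*n) : ℕ) : ℝ) := by
    have h1 : min n (m*n) = n := min_eq_left (Nat.le_mul_of_pos_left n (by omega))
    have h2 : min n ((m+1)*n) = n := min_eq_left (Nat.le_mul_of_pos_left n (by omega))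
    rw [h1, h2]
  rw [← hbound]
  apply add_lt_add_left
  apply Finset.sum_lt_sum
  · intro j _
    apply mul_le_mul_of_nonneg_right
    · have : m * (j+1) ≤ (m+1) * (j+1) := Nat.mul_le_mul_right _ (by omega)
      have := min_le_min (le_refl n) this
      exact_mod_cast Nat.cast_le.2 this
    · have := delta_antitone c hc j
      linarith
  · refine ⟨0, Finset.mem_range.2 (by omega), ?_⟩
    have hd := delta_strict0 c hc
    have hm1 : min n (m*(0+1)) = m := by
      rw [Nat.mul_one]
      exact min_eq_right (by omega)
    have hm2 : min n ((m+1)*(0+1)) = m+1 := by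
      rw [Nat.mul_one]
      exact min_eq_right (by omega)
    rw [hm1, hm2]
    apply mul_lt_mul_of_pos_right
    · exact_mod_cast Nat.lt_succ_self m
    · simpa using sub_pos.2 hd

lemma Feq_lemma (n t : ℕ) (ht : 0 < t) (htn : t ≤ n) :
    (qlam n t - tAl n t) * (qlam n t - tBe n t) =
      tR n t * (tK n t + 1) * (qlam n t - tBe n t)
        + ((t : ℝ) - tR n t) * tK n t * (qlam n t - tAl n t) := by
  have hroot := qlam_root n t ht htn
  have hn := ncast n t
  simp only [qB, qC, tAl, tBe] at hroot ⊢
  linear_combination hroot - qlam n t * hn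

lemma Gsum_eq_one (n t : ℕ) (h2 : 2 ≤ t) (htn : t ≤ n) :
    Gsum n t (qlam n t - n) = 1 := by
  have ht : 0 < t := by omega
  have hbe := qlam_gt_tBe n t ht htn
  have hK1 := tK_ge_one n t ht htn
  have key := Feq_lemma n t ht htn
  have hd2 : 0 < qlam n t - tBe n t := by linarith
  have hd1 : 0 < qlam n t - tAl n t := by
    have : tAl n t = tBe n t - 2 := by rw [tAl, tBe]
    linarith
  have e1 : qlam n t - (n:ℝ) + 2 * (↑(n / t) + 1) = qlam n t - tAl n t := by
    rw [tAl, tK]; ring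
  have e2 : qlam n t - (n:ℝ) + 2 * (↑(n / t) : ℝ) = qlam n t - tBe n t := by
    rw [tBe, tK]; ring
  rw [Gsum, hfun, hfun]
  simp only [tAl, tBe, tK, tR] at key hd1 hd2 ⊢
  push_cast at key hd1 hd2 ⊢
  have hd1' : (0:ℝ) < qlam n t - ↑n + 2 * ((↑(n / t) : ℝ) + 1) := by linarith
  have hd2' : (0:ℝ) < qlam n t - ↑n + 2 * (↑(n / t) : ℝ) := by linarith
  have hA : qlam n t - ↑n + (↑(n / t) + 1) * 2 ≠ 0 := (by linarith : (0:ℝ) < _).ne'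
  have hB : qlam n t - ↑n + ↑(n / t) * 2 ≠ 0 := (by linarith : (0:ℝ) < _).ne'
  field_simp [hd1'.ne', hd2'.ne']
  linear_combination (-1 : ℝ) * key


lemma qlam_lt_next (n t : ℕ) (h2 : 2 ≤ t) (ht1 : t + 1 ≤ n) : qlam n t < qlam n (t + 1) := by
  have htn : t ≤ n := by omega
  have ht : 0 < t := by omega
  set lam := qlam n t with hlam
  have hc : 0 ≤ lam - n := by
    have := qlam_ge_n n t h2 htn
    linarith
  have hG1 : Gsum n t (lam - n) = 1 := Gsum_eq_one n t h2 htn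
  have hG2 : 1 < Gsum n (t+1) (lam - n) := by
    rw [← hG1]
    exact Gsum_mono n t (lam - n) hc h2 ht1
  -- denominators for t+1
  have ht1' : 0 < t + 1 := by omega
  have hK1' := tK_ge_one n (t+1) ht1' ht1
  have hd2' : (0:ℝ) < lam - n + 2 * (↑(n / (t+1)) : ℝ) := by
    rw [tK] at hK1'
    linarith
  have hd1' : (0:ℝ) < lam - n + 2 * ((↑(n / (t+1)) : ℝ) + 1) := by linarith
  -- F_{t+1}(lam) < 0
  have hn' := ncast n (t+1)
  have hGexp : Gsum n (t+1) (lam - n)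
      * ((lam - n + 2 * ((↑(n / (t+1)) : ℝ) + 1)) * (lam - n + 2 * (↑(n / (t+1)) : ℝ)))
      = (↑(n % (t+1)) : ℝ) * ((↑(n / (t+1)) : ℝ) + 1) * (lam - n + 2 * (↑(n / (t+1)) : ℝ))
        + ((t+1 : ℝ) - (↑(n % (t+1)) : ℝ)) * (↑(n / (t+1)) : ℝ)
          * (lam - n + 2 * ((↑(n / (t+1)) : ℝ) + 1)) := by
    rw [Gsum, hfun, hfun]
    push_cast
    have hB : lam - ↑n + ↑(n / (t + 1)) * 2 ≠ 0 := (by linarith : (0:ℝ) < _).ne'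
    field_simp [hB]
  have hFpoly : lam^2 - qB n (t+1) * lam + qC n (t+1)
      = (lam - n + 2 * ((↑(n / (t+1)) : ℝ) + 1)) * (lam - n + 2 * (↑(n / (t+1)) : ℝ))
        - ((↑(n % (t+1)) : ℝ) * ((↑(n / (t+1)) : ℝ) + 1) * (lam - n + 2 * (↑(n / (t+1)) : ℝ))
          + ((t+1 : ℝ) - (↑(n % (t+1)) : ℝ)) * (↑(n / (t+1)) : ℝ)
            * (lam - n + 2 * ((↑(n / (t+1)) : ℝ) + 1))) := by
    simp only [qB, qC, tAl, tBe, tK, tR] at hn' ⊢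
    push_cast at hn' ⊢
    linear_combination lam * hn'
  have hFneg : lam^2 - qB n (t+1) * lam + qC n (t+1) < 0 := by
    rw [hFpoly, ← hGexp]
    have hprod : (0:ℝ) < (lam - n + 2 * ((↑(n / (t+1)) : ℝ) + 1)) * (lam - n + 2 * (↑(n / (t+1)) : ℝ)) :=
      mul_pos hd1' hd2'
    nlinarith [hG2, hprod]
  -- conclude lam < qlam n (t+1)
  have hD' := qD_pos n (t+1) ht1' ht1
  have hs : Real.sqrt (qD n (t+1)) ^ 2 = qD n (t+1) := Real.sq_sqrt hD'.le
  have hs2 : Real.sqrt (qD n (t+1)) ^ 2 = qB n (t+1) ^ 2 - 4 * qC n (t+1) := hs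
  have hs0 : 0 ≤ Real.sqrt (qD n (t+1)) := Real.sqrt_nonneg _
  by_contra hcon
  push_neg at hcon
  rw [qlam] at hcon
  have hu : 0 ≤ lam - (qB n (t+1) + Real.sqrt (qD n (t+1)))/2 := by linarith
  have hu2 : 0 ≤ lam - (qB n (t+1) - Real.sqrt (qD n (t+1)))/2 := by linarith
  have hp := mul_nonneg hu2 hu
  have hexp : (lam - (qB n (t+1) - Real.sqrt (qD n (t+1)))/2)
      * (lam - (qB n (t+1) + Real.sqrt (qD n (t+1)))/2)
      = lam^2 - qB n (t+1) * lam + qC n (t+1) := by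
    linear_combination -hs2/4
  rw [hexp] at hp
  linarith

lemma q1_turan (n t : ℕ) (h2 : 2 ≤ t) (htn : t ≤ n) :
    q1 (turanGraph n t) = qlam n t := by
  have ht : 0 < t := by omega
  haveI : Nonempty (Fin n) := ⟨⟨0, by omega⟩⟩
  have hbe := qlam_gt_tBe n t ht htn
  have hal : tAl n t = tBe n t - 2 := by rw [tAl, tBe]
  apply q1_eq_of_pos_eigenvector (turanGraph n t) (tX n t (qlam n t))
  · intro v
    rw [tX]
    split_ifs <;> linarith
  · exact turan_eigen n t ht (qlam n t) (Feq_lemma n t ht htn)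

end TuranAux

theorem q1_turanGraph_strictMono (n t : ℕ) (h2 : 2 ≤ t) (ht : t ≤ n - 1) :
    q1 (turanGraph n t) < q1 (turanGraph n (t + 1)) := by
  have hn : t + 1 ≤ n := by omega
  rw [TuranAux.q1_turan n t h2 (by omega), TuranAux.q1_turan n (t+1) (by omega) hn]
  exact TuranAux.qlam_lt_next n t h2 hn
end

section
/- Let n = kt + r with t ≥ 3, k ≥ 1, 0 ≤ r < t. Then the floor of n·q₁(T_{n,t})/4 equals the number of edges of T_{n,t}, where q₁(T_{n,t}) = ((3t−4)k + 3r − 2 + √(t²k² + ((2r+4)t − 8r)k + (r−2)²))/2. -/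
open SimpleGraph

open Finset in
lemma count_mod_s10 (k t r i : ℕ) (ht : 0 < t) (hrt : r < t) (hi : i < t) :
    #({x ∈ Finset.range (k * t + r) | x % t = i}) = if i < r then k + 1 else k := by
  have himg : {x ∈ Finset.range (k * t + r) | x % t = i}
      = (Finset.range (if i < r then k + 1 else k)).image (fun j => j * t + i) := by
    ext x
    simp only [Finset.mem_filter, Finset.mem_range, Finset.mem_image]
    constructor
    · rintro ⟨hx, hxi⟩
      refine ⟨x / t, ?_, by rw [mul_comm, ← hxi, Nat.div_add_mod]⟩
      split_ifs with hir
      · rw [Nat.div_lt_iff_lt_mul ht]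
        have : (k + 1) * t = k * t + t := by ring
        omega
      · rw [Nat.div_lt_iff_lt_mul ht]
        by_contra hc
        push_neg at hc
        obtain ⟨m, rfl⟩ := Nat.exists_eq_add_of_le hc
        rw [mul_comm] at hxi
        rw [Nat.mul_add_mod] at hxi
        have hm : m < r := by omega
        rw [Nat.mod_eq_of_lt (lt_trans hm hrt)] at hxi
        omega
    · rintro ⟨j, hj, rfl⟩
      have hmod : (j * t + i) % t = i := by
        rw [mul_comm, Nat.mul_add_mod, Nat.mod_eq_of_lt hi]
      refine ⟨?_, hmod⟩
      split_ifs at hj with hir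
      · have : j * t ≤ k * t := Nat.mul_le_mul_right t (by omega)
        omega
      · have : (j + 1) * t ≤ k * t := Nat.mul_le_mul_right t (by omega)
        have e : (j + 1) * t = j * t + t := by ring
        omega
  rw [himg, Finset.card_image_of_injective _ (fun a b hab => by
    have : a * t = b * t := by omega
    exact Nat.eq_of_mul_eq_mul_right ht this), Finset.card_range]

open Finset in
lemma count_lt (k t r : ℕ) (ht : 0 < t) (hrt : r < t) :
    #({x ∈ Finset.range (k * t + r) | x % t < r}) = r * (k + 1) := by
  rw [Finset.card_eq_sum_card_fiberwise (f := (· % t)) (t := Finset.range r)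
    (fun x hx => Finset.mem_range.mpr (Finset.mem_filter.mp hx).2)]
  have : ∀ i ∈ Finset.range r,
      #({x ∈ ({x ∈ Finset.range (k * t + r) | x % t < r} : Finset ℕ) | x % t = i}) = k + 1 := by
    intro i hi
    rw [Finset.mem_range] at hi
    rw [Finset.filter_filter]
    have : ({x ∈ Finset.range (k * t + r) | x % t < r ∧ x % t = i} : Finset ℕ)
        = {x ∈ Finset.range (k * t + r) | x % t = i} := by
      apply Finset.filter_congr
      intro x _
      constructor
      · exact fun h => h.2
      · exact fun h => ⟨h ▸ hi, h⟩
    rw [this, count_mod_s10 k t r i ht hrt (lt_trans hi hrt), if_pos hi]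
  rw [Finset.sum_congr rfl this, Finset.sum_const, Finset.card_range, smul_eq_mul]

open Finset SimpleGraph in
lemma two_mul_edges (n t k r : ℕ) (ht : 0 < t) (hn : n = k * t + r) (hrt : r < t) :
    2 * #(turanGraph n t).edgeFinset + (n * k + r * (k + 1)) = n ^ 2 := by
  classical
  have h2 := SimpleGraph.two_mul_card_edgeFinset (G := turanGraph n t)
  have hsplit := Finset.card_filter_add_card_filter_not
    (s := (Finset.univ : Finset (Fin n × Fin n)))
    (p := fun z => (turanGraph n t).Adj z.1 z.2)
  have hS : #({z ∈ (Finset.univ : Finset (Fin n × Fin n)) |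
      ¬ (turanGraph n t).Adj z.1 z.2}) = n * k + r * (k + 1) := by
    have hadj : ∀ z : Fin n × Fin n,
        (¬ (turanGraph n t).Adj z.1 z.2) ↔ ((z.1 : ℕ) % t = (z.2 : ℕ) % t) := by
      intro z; simp [turanGraph]
    calc #({z ∈ (Finset.univ : Finset (Fin n × Fin n)) | ¬ (turanGraph n t).Adj z.1 z.2})
        = ∑ x : Fin n, ∑ y : Fin n, if (x : ℕ) % t = (y : ℕ) % t then 1 else 0 := by
          rw [Finset.card_filter]
          rw [Fintype.sum_prod_type]
          exact Finset.sum_congr rfl fun x _ => Finset.sum_congr rfl fun y _ => by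
            rw [if_congr (hadj (x, y)) rfl rfl]
      _ = ∑ x ∈ Finset.range n, ∑ y ∈ Finset.range n,
            if x % t = y % t then 1 else 0 := by
          rw [Fin.sum_univ_eq_sum_range (fun x => ∑ y : Fin n,
            if x % t = (y : ℕ) % t then 1 else 0)]
          exact Finset.sum_congr rfl fun x _ =>
            Fin.sum_univ_eq_sum_range (fun y => if x % t = y % t then 1 else 0) n
      _ = ∑ x ∈ Finset.range n, (if x % t < r then k + 1 else k) := by
          refine Finset.sum_congr rfl fun x _ => ?_
          have : (∑ y ∈ Finset.range n, if x % t = y % t then 1 else 0)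
              = #({y ∈ Finset.range n | y % t = x % t}) := by
            rw [Finset.card_filter]
            exact Finset.sum_congr rfl fun y _ => by rw [if_congr (eq_comm) rfl rfl]
          rw [this, hn, count_mod_s10 k t r (x % t) ht hrt (Nat.mod_lt x ht)]
      _ = ∑ x ∈ Finset.range n, (k + if x % t < r then 1 else 0) := by
          refine Finset.sum_congr rfl fun x _ => ?_; split_ifs <;> omega
      _ = n * k + r * (k + 1) := by
          rw [Finset.sum_add_distrib, Finset.sum_const, Finset.card_range, smul_eq_mul,
            ← Finset.card_filter, hn, count_lt k t r ht hrt]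
  have hcard : #(Finset.univ : Finset (Fin n × Fin n)) = n ^ 2 := by
    simp [Finset.card_univ, sq]
  have h2' : 2 * #(turanGraph n t).edgeFinset
      = #({z ∈ (Finset.univ : Finset (Fin n × Fin n)) | (turanGraph n t).Adj z.1 z.2}) := by
    rw [h2]
  rw [← h2', hS] at hsplit
  omega

set_option maxHeartbeats 2000000 in
theorem floor_n_mul_q1_turan (n t k r : ℕ) (ht : 3 ≤ t) (hk : 1 ≤ k)
    (hn : n = k * t + r) (hr : r < t) :
    ⌊(n : ℝ) * turanBound t k r / 4⌋ = ((turanGraph n t).edgeSet.ncard : ℤ) := by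
  classical
  have ht0 : 0 < t := by omega
  have hE := two_mul_edges n t k r ht0 hn hr
  have hncard : (turanGraph n t).edgeSet.ncard = (turanGraph n t).edgeFinset.card := by
    rw [SimpleGraph.edgeFinset, Set.ncard_eq_toFinset_card']
  rw [hncard]
  obtain ⟨E, hEdef⟩ : ∃ E : ℕ, (turanGraph n t).edgeFinset.card = E := ⟨_, rfl⟩
  rw [hEdef] at hE ⊢
  clear hEdef hncard
  -- real casts
  have hK1 : (1 : ℝ) ≤ (k : ℝ) := by exact_mod_cast hk
  have hT3 : (3 : ℝ) ≤ (t : ℝ) := by exact_mod_cast ht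
  have hR0 : (0 : ℝ) ≤ (r : ℝ) := Nat.cast_nonneg r
  have hRT : (r : ℝ) + 1 ≤ (t : ℝ) := by exact_mod_cast hr
  have hN : (n : ℝ) = (k : ℝ) * t + r := by rw [hn]; push_cast; ring
  have hNpos : (0 : ℝ) < (n : ℝ) := by nlinarith
  have hEr : (E : ℝ) = ((n : ℝ) ^ 2 - ((n : ℝ) * k + r * (k + 1))) / 2 := by
    have : (2 : ℝ) * E + ((n : ℝ) * k + r * (k + 1)) = (n : ℝ) ^ 2 := by exact_mod_cast hE
    linarith
  set A : ℝ := (3 * (t : ℝ) - 4) * k + 3 * r - 2 with hA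
  set D : ℝ := (k : ℝ) ^ 2 * (t : ℝ) ^ 2 + ((2 * (r : ℝ) + 4) * t - 8 * r) * k
      + ((r : ℝ) - 2) ^ 2 with hD
  have hD0 : 0 ≤ D := by
    have hDalt : D = ((k : ℝ) * t + r - 2) ^ 2 + 8 * k * ((t : ℝ) - r) := by
      rw [hD]; ring
    nlinarith [sq_nonneg ((k : ℝ) * t + r - 2)]
  have hs0 : 0 ≤ Real.sqrt D := Real.sqrt_nonneg D
  have hss : Real.sqrt D ^ 2 = D := Real.sq_sqrt hD0
  have hns : ((n : ℝ) * Real.sqrt D) ^ 2 = (n : ℝ) ^ 2 * D := by rw [mul_pow, hss]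
  have hns0 : 0 ≤ (n : ℝ) * Real.sqrt D := mul_nonneg hNpos.le hs0
  have hkt3 : (3 : ℝ) ≤ (k : ℝ) * t := by nlinarith
  -- X := 8 E - A n  is nonnegative
  have hX0 : 0 ≤ 8 * (E : ℝ) - A * n := by
    rw [hEr, hN, hA]
    nlinarith [mul_nonneg (mul_nonneg (by linarith : (0:ℝ) ≤ 2 * (k:ℝ)) hR0)
        (by linarith : (0:ℝ) ≤ (t:ℝ) - r - 1),
      mul_nonneg (by linarith : (0:ℝ) ≤ 2 * (k:ℝ)) (by linarith : (0:ℝ) ≤ (t:ℝ) - r - 1),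
      sq_nonneg ((r : ℝ) - 1), sq_nonneg ((k : ℝ) * t - 3),
      mul_nonneg (mul_nonneg (by linarith : (0:ℝ) ≤ 2*(k:ℝ)) hR0) hR0]
  -- key identity: n² D - X² = 16 k r (k+1)(t-r) ≥ 0
  have hkey1 : (n : ℝ) ^ 2 * D - (8 * (E : ℝ) - A * n) ^ 2
      = 16 * k * r * (k + 1) * ((t : ℝ) - r) := by
    rw [hEr, hN, hA, hD]; ring
  have hrhs0 : (0:ℝ) ≤ 16 * k * r * (k + 1) * ((t : ℝ) - r) := by
    have : (0:ℝ) ≤ 16 * (k:ℝ) * r * (k + 1) :=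
      mul_nonneg (mul_nonneg (by positivity) hR0) (by linarith)
    exact mul_nonneg this (by linarith)
  have hXle : 8 * (E : ℝ) - A * n ≤ (n : ℝ) * Real.sqrt D := by
    refine le_of_pow_le_pow_left₀ two_ne_zero hns0 ?_
    rw [hns]; nlinarith [hkey1, hrhs0, hX0]
  -- strict upper bound: n √D < 8(E+1) - A n
  have hkey2 : (8 * ((E : ℝ) + 1) - A * n) ^ 2 - (n : ℝ) ^ 2 * D
      = 16 * ((k:ℝ)^2*t^2 + k*t*r + r^2 + k^2*r^2 + k*r^2 - 4*k*r - k^2*t*r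
          - 2*r + 4 + 2*k*t) := by
    rw [hEr, hN, hA, hD]; ring
  have hpos : (0 : ℝ) < (8 * ((E : ℝ) + 1) - A * n) ^ 2 - (n : ℝ) ^ 2 * D := by
    rw [hkey2]
    nlinarith [sq_nonneg ((k:ℝ)*r - 2), sq_nonneg ((r:ℝ) - 1),
      mul_nonneg (mul_nonneg (mul_nonneg (Nat.cast_nonneg (α := ℝ) k) (Nat.cast_nonneg k))
        (Nat.cast_nonneg t)) (by linarith : (0:ℝ) ≤ (t:ℝ) - r - 1),
      mul_nonneg (by nlinarith : (0:ℝ) ≤ (k:ℝ)^2 - 1) (by linarith : (0:ℝ) ≤ (t:ℝ)),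
      mul_nonneg (mul_nonneg (Nat.cast_nonneg (α := ℝ) k) (Nat.cast_nonneg t)) hR0]
  have hY0 : (0:ℝ) < 8 * ((E : ℝ) + 1) - A * n := by linarith
  have hYlt : (n : ℝ) * Real.sqrt D < 8 * ((E : ℝ) + 1) - A * n := by
    refine lt_of_pow_lt_pow_left₀ 2 hY0.le ?_
    rw [hns]; linarith
  -- conclude
  clear_value A D
  rw [Int.floor_eq_iff]
  unfold turanBound
  rw [← hA, ← hD]
  push_cast
  constructor
  · linarith
  · linarith
end

section
/- For integers n and ω with 5 ≤ ω < ⌈n/2⌉, the Turán graph T_{n,ω} satisfies q₁(T_{n,ω}) > 3n/2 + ω − 4. In particular, the conjectured bound q₁ − ω ≤ 3n/2 − 4 of Hansen and Lucas fails in this range. -/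
open SimpleGraph

private lemma sum_range_mod_mul (w k : ℕ) (g : ℕ → ℝ) :
    ∑ v ∈ Finset.range (w * k), g (v % w) = (k : ℝ) * ∑ j ∈ Finset.range w, g j := by
  induction k with
  | zero => simp
  | succ k ih =>
    rw [Nat.mul_succ, Finset.sum_range_add, ih]
    have h : ∀ i ∈ Finset.range w, g ((w * k + i) % w) = g i := by
      intro i hi
      rw [Nat.add_comm, Nat.add_mul_mod_self_left, Nat.mod_eq_of_lt (Finset.mem_range.1 hi)]
    rw [Finset.sum_congr rfl h]
    push_cast
    ring

private lemma sum_range_mod (w r k : ℕ) (hr : r < w) (g : ℕ → ℝ) :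
    ∑ v ∈ Finset.range (w * k + r), g (v % w) =
      (k : ℝ) * ∑ j ∈ Finset.range w, g j + ∑ j ∈ Finset.range r, g j := by
  rw [Finset.sum_range_add, sum_range_mod_mul]
  congr 1
  refine Finset.sum_congr rfl fun i hi => ?_
  rw [Nat.add_comm, Nat.add_mul_mod_self_left,
    Nat.mod_eq_of_lt (lt_trans (Finset.mem_range.1 hi) hr)]

private lemma aux_poly (K W R : ℝ) (hK : 2 ≤ K) (hW : 5 ≤ W) (hR : 1 ≤ R) (hRW : R ≤ W - 1) :
    (K*W - 2*R*K - 4*K - R - 2*W + 8) * (-(K*W) + 2*R*K + R - 4*K - 2*W + 4)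
      < 4*(W-R)*K*R*(K+1) := by
  nlinarith [mul_nonneg (sub_nonneg.2 hK) (sub_nonneg.2 hW), sq_nonneg (K*W - 2*R*K),
    mul_nonneg (sub_nonneg.2 hR) (sub_nonneg.2 hRW), sq_nonneg (K-2), sq_nonneg (W-5),
    mul_nonneg (mul_nonneg (sub_nonneg.2 hK) (sub_nonneg.2 hR)) (sub_nonneg.2 hRW),
    mul_nonneg (mul_nonneg (sub_nonneg.2 hK) (sub_nonneg.2 hW)) (sub_nonneg.2 hR),
    sq_nonneg (K*W - 2*R*K - 4*K - R - 2*W + 8 + (-(K*W) + 2*R*K + R - 4*K - 2*W + 4))]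

private lemma sqrt_gt (p q s t c : ℝ) (hqs : 0 ≤ q * s)
    (hchi : (c - p) * (c - t) < q * s) :
    c < ((p + t) + Real.sqrt ((p - t)^2 + 4*(q*s))) / 2 := by
  have hD : (0:ℝ) ≤ (p - t)^2 + 4*(q*s) := by positivity
  have h1 : Real.sqrt ((p - t)^2 + 4*(q*s)) ^ 2 = (p - t)^2 + 4*(q*s) := Real.sq_sqrt hD
  have h0 : 0 ≤ Real.sqrt ((p - t)^2 + 4*(q*s)) := Real.sqrt_nonneg _
  nlinarith [h1, h0, hchi]

private lemma char_eq (p q s t : ℝ) (hqs : 0 ≤ q * s) :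
    (((p + t) + Real.sqrt ((p - t)^2 + 4*(q*s))) / 2 - p)
      * (((p + t) + Real.sqrt ((p - t)^2 + 4*(q*s))) / 2 - t) = q * s := by
  have hD : (0:ℝ) ≤ (p - t)^2 + 4*(q*s) := by positivity
  have h1 : Real.sqrt ((p - t)^2 + 4*(q*s)) ^ 2 = (p - t)^2 + 4*(q*s) := Real.sq_sqrt hD
  linear_combination h1 / 4

private lemma bddAbove_eigen {V : Type*} [Fintype V] [DecidableEq V] (G : SimpleGraph V) :
    BddAbove {μ : ℝ | ∃ x : V → ℝ, x ≠ 0 ∧ (signlessLaplacian G).mulVec x = μ • x} := by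
  classical
  refine ⟨(Fintype.card V) * (Fintype.card V + 1), ?_⟩
  rintro μ ⟨x, hx0, hx⟩
  obtain ⟨u, hu⟩ := Function.ne_iff.mp hx0
  obtain ⟨v, -, hv⟩ := Finset.exists_max_image Finset.univ (fun z => |x z|)
    ⟨u, Finset.mem_univ u⟩
  have hxv : 0 < |x v| := lt_of_lt_of_le (abs_pos.2 hu) (hv u (Finset.mem_univ u))
  have hμv : μ * x v = ∑ z : V, signlessLaplacian G v z * x z := by
    have h := congrFun hx v
    rw [Pi.smul_apply, smul_eq_mul] at h
    rw [← h]
    rfl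
  have hQ : ∀ z : V, 0 ≤ signlessLaplacian G v z ∧
      signlessLaplacian G v z ≤ (Fintype.card V : ℝ) + 1 := by
    intro z
    have hd : (G.degree v : ℝ) ≤ Fintype.card V := by
      exact_mod_cast (Finset.card_le_univ _ : (G.neighborFinset v).card ≤ _)
    have he : signlessLaplacian G v z =
        (if v = z then (G.degree v : ℝ) else 0) + (if G.Adj v z then 1 else 0) := by
      show Matrix.diagonal _ v z + G.adjMatrix ℝ v z = _
      rw [Matrix.diagonal_apply, SimpleGraph.adjMatrix_apply]
    rw [he]
    constructor
    · split_ifs <;> positivity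
    · split_ifs <;> push_cast <;> linarith
  have h2 : ∀ z : V, |signlessLaplacian G v z * x z| ≤ ((Fintype.card V : ℝ) + 1) * |x v| := by
    intro z
    rw [abs_mul, abs_of_nonneg (hQ z).1]
    exact mul_le_mul (hQ z).2 (hv z (Finset.mem_univ z)) (abs_nonneg _) (by positivity)
  have habs : |μ| * |x v| ≤ (Fintype.card V) * ((Fintype.card V : ℝ) + 1) * |x v| := by
    calc |μ| * |x v| = |μ * x v| := (abs_mul _ _).symm
      _ ≤ ∑ z : V, |signlessLaplacian G v z * x z| := by
          rw [hμv]; exact Finset.abs_sum_le_sum_abs _ _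
      _ ≤ ∑ _z : V, ((Fintype.card V : ℝ) + 1) * |x v| :=
          Finset.sum_le_sum fun z _ => h2 z
      _ = (Fintype.card V) * ((Fintype.card V : ℝ) + 1) * |x v| := by
          rw [Finset.sum_const, Finset.card_univ, nsmul_eq_mul]; ring
  have hfin : |μ| ≤ (Fintype.card V) * ((Fintype.card V : ℝ) + 1) :=
    le_of_mul_le_mul_right habs hxv
  calc μ ≤ |μ| := le_abs_self μ
    _ ≤ _ := hfin
    _ = _ := by push_cast; ring

set_option maxHeartbeats 1000000 in
theorem q1_turan_gt_of_mid_cliqueNum (n w : ℕ) (h5 : 5 ≤ w) (hw : w < (n + 1) / 2) :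
    q1 (turanGraph n w) > 3 * (n : ℝ) / 2 + w - 4 := by
  have hw0 : 0 < w := by omega
  have hn2w : 2 * w + 1 ≤ n := by omega
  set k := n / w with hkdef
  set r := n % w with hrdef
  have hnkr : w * k + r = n := Nat.div_add_mod n w
  have hrw : r < w := Nat.mod_lt n hw0
  have hk2 : 2 ≤ k := by
    by_contra h
    push_neg at h
    have : w * k ≤ w * 1 := Nat.mul_le_mul_left w (by omega)
    omega
  have hk3 : r = 0 → 3 ≤ k := by
    intro h0
    by_contra h
    push_neg at h
    have : w * k ≤ w * 2 := Nat.mul_le_mul_left w (by omega)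
    omega
  have hNcast : (n : ℝ) = (w:ℝ) * (k:ℝ) + (r:ℝ) := by rw [← hnkr]; push_cast; ring
  have hKge : (2:ℝ) ≤ (k:ℝ) := by exact_mod_cast hk2
  have hWge : (5:ℝ) ≤ (w:ℝ) := by exact_mod_cast h5
  have hRge : (0:ℝ) ≤ (r:ℝ) := by positivity
  have hRW : (r:ℝ) ≤ (w:ℝ) - 1 := by
    have : (r:ℝ) + 1 ≤ (w:ℝ) := by exact_mod_cast hrw
    linarith
  set q : ℝ := (r:ℝ) * ((k:ℝ) + 1) with hq
  set s : ℝ := ((w:ℝ) - (r:ℝ)) * (k:ℝ) with hs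
  set p : ℝ := (w:ℝ) * (k:ℝ) + (r:ℝ) - 2 * (k:ℝ) + s with hp
  set t : ℝ := (w:ℝ) * (k:ℝ) + (r:ℝ) - 2 * (k:ℝ) - 2 + q with ht
  have hqs : 0 ≤ q * s := by
    rw [hq, hs]
    have h1 : (0:ℝ) ≤ (k:ℝ) + 1 := by linarith
    have h2 : (0:ℝ) ≤ (w:ℝ) - (r:ℝ) := by linarith
    have h3 : (0:ℝ) ≤ (k:ℝ) := by linarith
    positivity
  set μ : ℝ := ((p + t) + Real.sqrt ((p - t)^2 + 4*(q*s))) / 2 with hμ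
  set c : ℝ := 3 * (n : ℝ) / 2 + (w:ℝ) - 4 with hc
  -- the discriminant inequality
  have hchi : (c - p) * (c - t) < q * s := by
    rcases Nat.eq_zero_or_pos r with h0 | hrpos
    · have hR0 : (r:ℝ) = 0 := by exact_mod_cast congrArg (Nat.cast (R := ℝ)) h0
      have hk3' : (3:ℝ) ≤ (k:ℝ) := by exact_mod_cast hk3 h0
      have h1 : c - p < 0 := by
        rw [hc, hp, hs, hNcast, hR0]
        nlinarith [mul_pos (show (0:ℝ) < (k:ℝ) - 2 by linarith)
          (show (0:ℝ) < (w:ℝ) - 4 by linarith)]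
      have h2 : 0 < c - t := by
        rw [hc, ht, hq, hNcast, hR0]
        nlinarith
      have h3 : q * s = 0 := by rw [hq, hR0]; ring
      nlinarith [mul_pos_of_neg_of_neg h1 (neg_neg_of_pos h2)]
    · have hRge1 : (1:ℝ) ≤ (r:ℝ) := by exact_mod_cast hrpos
      have key := aux_poly (k:ℝ) (w:ℝ) (r:ℝ) hKge hWge hRge1 hRW
      rw [hc, hp, ht, hq, hs, hNcast]
      nlinarith [key]
  have hμgt : c < μ := by rw [hμ]; exact sqrt_gt p q s t c hqs hchi
  have hchar : (μ - p) * (μ - t) = q * s := by rw [hμ]; exact char_eq p q s t hqs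
  -- the test vector value on big parts
  set b : ℝ := if r = 0 then 0 else (μ - p) / q with hb
  have hF1 : p + q * b = μ := by
    rcases Nat.eq_zero_or_pos r with h0 | hrpos
    · have hR0 : (r:ℝ) = 0 := by exact_mod_cast congrArg (Nat.cast (R := ℝ)) h0
      have hq0 : q = 0 := by rw [hq, hR0]; ring
      have hpt : 0 ≤ p - t := by
        rw [hp, ht, hq, hs, hR0]
        nlinarith
      have hμp : μ = p := by
        rw [hμ, hq0]
        rw [show (p - t)^2 + 4*(0*s) = (p-t)^2 by ring, Real.sqrt_sq hpt]
        ring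
      rw [hq0, hμp]; ring
    · have hRge1 : (1:ℝ) ≤ (r:ℝ) := by exact_mod_cast hrpos
      have hq0 : q ≠ 0 := by rw [hq]; nlinarith
      have hqb : q * b = μ - p := by
        rw [hb, if_neg (Nat.pos_iff_ne_zero.mp hrpos)]
        field_simp
      linear_combination hqb
  have hF2 : r ≠ 0 → s + t * b = μ * b := by
    intro hrne
    have hrpos : 0 < r := Nat.pos_of_ne_zero hrne
    have hRge1 : (1:ℝ) ≤ (r:ℝ) := by exact_mod_cast hrpos
    have hq0 : q ≠ 0 := by rw [hq]; nlinarith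
    have hqb : q * b = μ - p := by
      rw [hb, if_neg hrne]
      field_simp
    refine mul_left_cancel₀ hq0 ?_
    linear_combination (t - μ) * hqb - hchar
  -- the test vector
  set X : ℕ → ℝ := fun m => if m < r then b else 1 with hX
  set x : Fin n → ℝ := fun v => X ((v : ℕ) % w) with hx
  have hSr : ∑ j ∈ Finset.range r, X j = (r:ℝ) * b := by
    have h1 : ∀ j ∈ Finset.range r, X j = b := fun j hj => if_pos (Finset.mem_range.1 hj)
    rw [Finset.sum_congr rfl h1, Finset.sum_const, Finset.card_range, nsmul_eq_mul]
  have hSw : ∑ j ∈ Finset.range w, X j = (r:ℝ) * b + ((w:ℝ) - (r:ℝ)) := by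
    have hsplit : Finset.range w = Finset.range (r + (w - r)) := by
      congr 1
      omega
    rw [hsplit, Finset.sum_range_add, hSr]
    have hone : ∀ i ∈ Finset.range (w - r), X (r + i) = 1 := by
      intro i hi
      exact if_neg (by omega)
    rw [Finset.sum_congr rfl hone, Finset.sum_const, Finset.card_range, nsmul_eq_mul, mul_one]
    have hcast : ((w - r : ℕ) : ℝ) = (w:ℝ) - (r:ℝ) := by
      exact_mod_cast Nat.cast_sub (le_of_lt hrw)
    rw [hcast]
  -- the eigen equation
  have key : ∀ v : Fin n, (signlessLaplacian (turanGraph n w)).mulVec x v = μ * x v := by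
    intro v
    set j0 := (v : ℕ) % w with hj0
    have hj0w : j0 < w := Nat.mod_lt _ hw0
    set G0 : ℕ → ℝ := fun m => if j0 = m then 0 else X j0 + X m with hG0
    have hQ : signlessLaplacian (turanGraph n w) =
        Matrix.diagonal (fun z => ((turanGraph n w).degree z : ℝ))
          + (turanGraph n w).adjMatrix ℝ := by
      unfold signlessLaplacian
      congr!
    have hdeg : ((turanGraph n w).degree v : ℝ)
        = ∑ u : Fin n, (if (turanGraph n w).Adj v u then (1:ℝ) else 0) := by
      rw [SimpleGraph.degree, SimpleGraph.neighborFinset_eq_filter, Finset.card_filter]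
      push_cast
      rfl
    have hnbr : ∑ u ∈ (turanGraph n w).neighborFinset v, x u
        = ∑ u : Fin n, (if (turanGraph n w).Adj v u then x u else 0) := by
      rw [SimpleGraph.neighborFinset_eq_filter, Finset.sum_filter]
    have hstep : ∀ u : Fin n,
        (if (turanGraph n w).Adj v u then (1:ℝ) else 0) * x v
          + (if (turanGraph n w).Adj v u then x u else 0) = G0 ((u : ℕ) % w) := by
      intro u
      by_cases h : j0 = (u : ℕ) % w
      · have hna : ¬ (turanGraph n w).Adj v u := fun ha => ha h
        have hg : G0 ((u : ℕ) % w) = 0 := if_pos h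
        rw [if_neg hna, if_neg hna, hg]
        ring
      · have ha : (turanGraph n w).Adj v u := h
        have hg : G0 ((u : ℕ) % w) = X j0 + X ((u : ℕ) % w) := if_neg h
        have hxu : x u = X ((u : ℕ) % w) := rfl
        have hxv' : x v = X j0 := rfl
        rw [if_pos ha, if_pos ha, hg, hxu, hxv']
        ring
    have hQv : (signlessLaplacian (turanGraph n w)).mulVec x v
        = ∑ u : Fin n, G0 ((u : ℕ) % w) := by
      rw [hQ, Matrix.add_mulVec, Pi.add_apply, Matrix.mulVec_diagonal,
        SimpleGraph.adjMatrix_mulVec_apply, hdeg, hnbr, Finset.sum_mul,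
        ← Finset.sum_add_distrib]
      exact Finset.sum_congr rfl fun u _ => hstep u
    have hsum : ∑ u : Fin n, G0 ((u : ℕ) % w)
        = (k : ℝ) * ∑ j ∈ Finset.range w, G0 j + ∑ j ∈ Finset.range r, G0 j := by
      rw [Fin.sum_univ_eq_sum_range (fun i => G0 (i % w)) n, ← hnkr]
      exact sum_range_mod w r k hrw G0
    have hG0decomp : ∀ j : ℕ, G0 j = (X j0 + X j) - (if j0 = j then X j0 + X j else 0) := by
      intro j
      by_cases h : j0 = j
      · have hg : G0 j = 0 := if_pos h
        rw [hg, if_pos h]; ring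
      · have hg : G0 j = X j0 + X j := if_neg h
        rw [hg, if_neg h]; ring
    have hGw : ∑ j ∈ Finset.range w, G0 j
        = (w:ℝ) * X j0 + ((r:ℝ) * b + ((w:ℝ) - (r:ℝ))) - 2 * X j0 := by
      rw [Finset.sum_congr rfl fun j _ => hG0decomp j, Finset.sum_sub_distrib,
        Finset.sum_add_distrib, Finset.sum_const, Finset.card_range, nsmul_eq_mul, hSw,
        Finset.sum_ite_eq, if_pos (Finset.mem_range.2 hj0w)]
      ring
    have hGr : ∑ j ∈ Finset.range r, G0 j
        = (r:ℝ) * X j0 + (r:ℝ) * b - (if j0 < r then 2 * X j0 else 0) := by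
      rw [Finset.sum_congr rfl fun j _ => hG0decomp j, Finset.sum_sub_distrib,
        Finset.sum_add_distrib, Finset.sum_const, Finset.card_range, nsmul_eq_mul, hSr,
        Finset.sum_ite_eq]
      by_cases h : j0 < r
      · rw [if_pos (Finset.mem_range.2 h), if_pos h]; ring
      · rw [if_neg (fun hm => h (Finset.mem_range.1 hm)), if_neg h]
    have hxv : x v = X j0 := rfl
    rw [hQv, hsum, hGw, hGr, hxv]
    by_cases hcase : j0 < r
    · have hXj0 : X j0 = b := if_pos hcase
      have hrne : r ≠ 0 := by omega
      have hF2' := hF2 hrne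
      rw [hs, ht, hq] at hF2'
      rw [hXj0, if_pos hcase]
      linear_combination hF2'
    · have hXj0 : X j0 = 1 := if_neg hcase
      rw [hXj0, if_neg hcase]
      rw [hp, hq, hs] at hF1
      linear_combination hF1
  -- x is nonzero
  have hx0 : x ≠ 0 := by
    have hrn : r < n := by omega
    intro h
    have h1 : x ⟨r, hrn⟩ = 0 := by rw [h]; rfl
    have h2 : x ⟨r, hrn⟩ = 1 := by
      calc x ⟨r, hrn⟩ = X (r % w) := rfl
        _ = X r := by rw [Nat.mod_eq_of_lt hrw]
        _ = 1 := if_neg (lt_irrefl r)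
    rw [h1] at h2
    exact zero_ne_one h2
  -- conclude
  have hmem : μ ∈ {μ : ℝ | ∃ y : Fin n → ℝ, y ≠ 0 ∧
      (signlessLaplacian (turanGraph n w)).mulVec y = μ • y} := by
    refine ⟨x, hx0, ?_⟩
    funext v
    rw [Pi.smul_apply, smul_eq_mul]
    exact key v
  have hle : μ ≤ q1 (turanGraph n w) := le_csSup (bddAbove_eigen _) hmem
  exact lt_of_lt_of_le hμgt hle
end

section
/- Let G be a connected simple graph of order n with clique number ω. Then q₁(G)/ω ≤ n/2. -/
open SimpleGraph

open Finset in
lemma signlessLaplacian_eq' {V : Type*} [Fintype V] [DecidableEq V]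
    (G : SimpleGraph V) [DecidableRel G.Adj] :
    signlessLaplacian G = Matrix.diagonal (fun v => (G.degree v : ℝ)) + G.adjMatrix ℝ := by
  unfold signlessLaplacian
  congr! 3 with v
  norm_cast
  congr 1
  exact Subsingleton.elim _ _

open Finset in
lemma mantel_sum {V : Type*} [Fintype V] [DecidableEq V] (G : SimpleGraph V)
    [DecidableRel G.Adj] (T : Finset V)
    (h : ∀ w ∈ T, ∀ z ∈ T, G.Adj w z →
      #(T.filter (G.Adj w)) + #(T.filter (G.Adj z)) ≤ #T) :
    2 * ∑ w ∈ T, #(T.filter (G.Adj w)) ≤ #T ^ 2 := by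
  set f : V → ℕ := fun w => #(T.filter (G.Adj w)) with hf
  have e1 : ∀ w, ∑ _z ∈ T.filter (G.Adj w), f w = f w * f w := by
    intro w; rw [Finset.sum_const, smul_eq_mul]
  have e2 : ∑ w ∈ T, ∑ z ∈ T.filter (G.Adj w), f z = ∑ w ∈ T, f w * f w := by
    calc ∑ w ∈ T, ∑ z ∈ T.filter (G.Adj w), f z
        = ∑ w ∈ T, ∑ z ∈ T, if G.Adj w z then f z else 0 := by
          simp [Finset.sum_filter]
      _ = ∑ z ∈ T, ∑ w ∈ T, if G.Adj w z then f z else 0 := Finset.sum_comm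
      _ = ∑ z ∈ T, f z * f z := by
          refine Finset.sum_congr rfl fun z _hz => ?_
          have hfc : T.filter (fun w => G.Adj w z) = T.filter (G.Adj z) := by
            apply Finset.filter_congr; intro w _; simp [G.adj_comm]
          rw [← Finset.sum_filter, hfc, Finset.sum_const, smul_eq_mul, mul_comm]
  have step1 : 2 * ∑ w ∈ T, f w * f w ≤ (∑ w ∈ T, f w) * #T := by
    have hkey : ∑ w ∈ T, ∑ z ∈ T.filter (G.Adj w), (f w + f z)
        = 2 * ∑ w ∈ T, f w * f w := by
      have hsplit : ∀ w ∈ T, ∑ z ∈ T.filter (G.Adj w), (f w + f z)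
          = (∑ _z ∈ T.filter (G.Adj w), f w) + ∑ z ∈ T.filter (G.Adj w), f z :=
        fun w _ => Finset.sum_add_distrib
      rw [Finset.sum_congr rfl hsplit, Finset.sum_add_distrib, e2,
        Finset.sum_congr rfl (fun w _ => e1 w), two_mul]
    rw [← hkey]
    calc ∑ w ∈ T, ∑ z ∈ T.filter (G.Adj w), (f w + f z)
        ≤ ∑ w ∈ T, ∑ _z ∈ T.filter (G.Adj w), #T := by
          refine Finset.sum_le_sum fun w hw => Finset.sum_le_sum fun z hz => ?_
          rw [Finset.mem_filter] at hz
          exact h w hw z hz.1 hz.2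
      _ = (∑ w ∈ T, f w) * #T := by
          simp only [Finset.sum_const, smul_eq_mul]
          rw [← Finset.sum_mul]
  have step2 : (∑ w ∈ T, f w) ^ 2 ≤ #T * ∑ w ∈ T, f w * f w := by
    have h2 := sq_sum_le_card_mul_sum_sq (s := T) (f := fun w => (f w : ℤ))
    have h3 : ((∑ w ∈ T, f w : ℕ) : ℤ) ^ 2 ≤ (#T : ℤ) * ∑ w ∈ T, ((f w : ℤ)) * (f w : ℤ) := by
      push_cast
      simpa [sq] using h2
    exact_mod_cast h3
  rcases Nat.eq_zero_or_pos (∑ w ∈ T, f w) with hS | hS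
  · rw [hS]; simp
  · have hc : (∑ w ∈ T, f w) * (2 * ∑ w ∈ T, f w) ≤ (∑ w ∈ T, f w) * #T ^ 2 := by
      nlinarith [step1, step2]
    exact Nat.le_of_mul_le_mul_left hc hS

lemma degree_pos_of_connected {n : ℕ} (G : SimpleGraph (Fin n)) [DecidableRel G.Adj]
    (hconn : G.Connected) (hn : 1 < n) (v : Fin n) : 0 < G.degree v := by
  rw [G.degree_pos_iff_exists_adj]
  obtain ⟨w, hw⟩ := Fintype.exists_ne_of_one_lt_card (by simpa using hn) v
  obtain ⟨p⟩ := hconn.preconnected v w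
  cases p with
  | nil => exact absurd rfl hw
  | cons h _ => exact ⟨_, h⟩

open Finset in
lemma eigen_ineq {n : ℕ} (G : SimpleGraph (Fin n)) [DecidableRel G.Adj]
    (hdeg : ∀ v, 0 < G.degree v) {μ : ℝ} {x : Fin n → ℝ} (hx : x ≠ 0)
    (heig : (signlessLaplacian G).mulVec x = μ • x) :
    ∃ u : Fin n, μ * G.degree u ≤ (G.degree u : ℝ) ^ 2 +
      ∑ w ∈ G.neighborFinset u, (G.degree w : ℝ) := by
  obtain ⟨v0, hv0⟩ := Function.ne_iff.mp hx
  have hneu : (Finset.univ : Finset (Fin n)).Nonempty := ⟨v0, Finset.mem_univ v0⟩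
  obtain ⟨u, -, hmax⟩ := Finset.exists_max_image Finset.univ
    (fun v => |x v| / (G.degree v : ℝ)) hneu
  have hdv : ∀ v, (0:ℝ) < G.degree v := fun v => by exact_mod_cast hdeg v
  have hdu := hdv u
  have hxu : x u ≠ 0 := by
    intro h0
    have h1 := hmax v0 (Finset.mem_univ v0)
    simp only [h0, abs_zero, zero_div] at h1
    have h2 := div_pos (abs_pos.mpr hv0) (hdv v0)
    linarith
  have he : (G.degree u : ℝ) * x u + ∑ w ∈ G.neighborFinset u, x w = μ * x u := by
    have h2 := congrFun heig u
    rw [signlessLaplacian_eq'] at h2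
    simpa [Matrix.add_mulVec, Matrix.mulVec_diagonal] using h2
  have habs : |μ - G.degree u| * |x u| ≤ ∑ w ∈ G.neighborFinset u, |x w| := by
    have h3 : (μ - G.degree u) * x u = ∑ w ∈ G.neighborFinset u, x w := by
      linear_combination -he
    calc |μ - (G.degree u : ℝ)| * |x u| = |(μ - G.degree u) * x u| := (abs_mul _ _).symm
      _ = |∑ w ∈ G.neighborFinset u, x w| := by rw [h3]
      _ ≤ ∑ w ∈ G.neighborFinset u, |x w| := Finset.abs_sum_le_sum_abs _ _
  have hsum : ∑ w ∈ G.neighborFinset u, |x w|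
      ≤ (∑ w ∈ G.neighborFinset u, (G.degree w : ℝ)) * (|x u| / G.degree u) := by
    rw [Finset.sum_mul]
    refine Finset.sum_le_sum fun w _ => ?_
    have h4 := hmax w (Finset.mem_univ w)
    calc |x w| = (G.degree w : ℝ) * (|x w| / G.degree w) := by
          rw [mul_comm, div_mul_cancel₀ _ (ne_of_gt (hdv w))]
      _ ≤ (G.degree w : ℝ) * (|x u| / G.degree u) :=
          mul_le_mul_of_nonneg_left h4 (hdv w).le
  refine ⟨u, ?_⟩
  have hxa : 0 < |x u| := abs_pos.mpr hxu
  have h5 : |μ - G.degree u| * |x u|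
      ≤ ((∑ w ∈ G.neighborFinset u, (G.degree w : ℝ)) / G.degree u) * |x u| :=
    (habs.trans hsum).trans_eq (by ring)
  have h6 : |μ - G.degree u| ≤ (∑ w ∈ G.neighborFinset u, (G.degree w : ℝ)) / G.degree u :=
    le_of_mul_le_mul_right h5 hxa
  have h7 : μ - G.degree u ≤ (∑ w ∈ G.neighborFinset u, (G.degree w : ℝ)) / G.degree u :=
    (le_abs_self _).trans h6
  have h8 := mul_le_mul_of_nonneg_right h7 hdu.le
  rw [div_mul_cancel₀ _ (ne_of_gt hdu)] at h8
  nlinarith [h8]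

theorem q1_div_cliqueNum_le (n : ℕ) (G : SimpleGraph (Fin n)) (hconn : G.Connected) :
    q1 G / (G.cliqueNum : ℝ) ≤ (n : ℝ) / 2 := by
  classical
  have hne : Nonempty (Fin n) := hconn.nonempty
  have hn1 : 1 ≤ n := by
    have := Fintype.card_pos (α := Fin n); simp at this; omega
  have hω1 : 1 ≤ G.cliqueNum := by
    obtain ⟨v⟩ := hne
    have hcl : G.IsClique ({v} : Finset (Fin n)) := by
      simp [SimpleGraph.isClique_singleton]
    have := SimpleGraph.IsClique.card_le_cliqueNum (G := G) (t := {v}) (tc := hcl)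
    simpa using this
  rcases eq_or_lt_of_le hn1 with h1 | hn2
  · -- n = 1 : the graph has no edges, Q = 0, q1 = 0
    have hn : n = 1 := h1.symm
    subst hn
    have hadj : ∀ a b : Fin 1, ¬ G.Adj a b := by
      intro a b h
      have : a = b := Subsingleton.elim a b
      subst this
      exact G.loopless.irrefl a h
    have hdeg0 : ∀ v : Fin 1, G.degree v = 0 := by
      intro v
      rw [SimpleGraph.degree, Finset.card_eq_zero, Finset.eq_empty_iff_forall_notMem]
      intro z hz
      rw [SimpleGraph.mem_neighborFinset] at hz
      exact hadj v z hz
    have hQ0 : signlessLaplacian G = 0 := by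
      rw [signlessLaplacian_eq']
      ext i j
      by_cases hij : i = j <;>
        simp [Matrix.add_apply, Matrix.diagonal_apply, hdeg0, hadj i j, hij]
    have hq : q1 G ≤ 0 := by
      apply Real.sSup_le _ le_rfl
      rintro μ ⟨x, hx, hex⟩
      obtain ⟨v0, hv0⟩ := Function.ne_iff.mp hx
      rw [hQ0] at hex
      have h2 := congrFun hex v0
      simp only [Matrix.zero_mulVec, Pi.zero_apply, Pi.smul_apply, smul_eq_mul] at h2
      rcases mul_eq_zero.mp h2.symm with h3 | h3
      · exact h3.le
      · exact absurd h3 hv0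
    have hωpos : (0:ℝ) < G.cliqueNum := by exact_mod_cast hω1
    have : q1 G / G.cliqueNum ≤ 0 := div_nonpos_of_nonpos_of_nonneg hq hωpos.le
    refine le_trans this ?_
    norm_num
  · -- n ≥ 2
    have hdegpos : ∀ v, 0 < G.degree v := degree_pos_of_connected G hconn hn2
    have hω2 : 2 ≤ G.cliqueNum := by
      obtain ⟨v⟩ := hne
      obtain ⟨w, hvw⟩ := (G.degree_pos_iff_exists_adj v).mp (hdegpos v)
      have hcl : G.IsClique ({v, w} : Finset (Fin n)) := by
        rw [Finset.coe_insert, Finset.coe_singleton]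
        exact SimpleGraph.isClique_pair.mpr fun _ => hvw
      have hcard : ({v, w} : Finset (Fin n)).card = 2 := Finset.card_pair hvw.ne
      have := SimpleGraph.IsClique.card_le_cliqueNum (G := G) (t := {v, w}) (tc := hcl)
      omega
    have hcf : G.CliqueFree (G.cliqueNum + 1) := by
      intro s hs
      have h1 := SimpleGraph.IsClique.card_le_cliqueNum (G := G) (t := s) (tc := hs.isClique)
      rw [hs.card_eq] at h1
      omega
    have hωpos : (0:ℝ) < G.cliqueNum := by
      have : (0:ℕ) < G.cliqueNum := by omega
      exact_mod_cast this
    rw [div_le_iff₀ hωpos]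
    apply Real.sSup_le _ (by positivity)
    rintro μ ⟨x, hx, hex⟩
    obtain ⟨u, hu⟩ := eigen_ineq G hdegpos hx hex
    have hd1 : 1 ≤ G.degree u := hdegpos u
    have hdn : G.degree u < n := by
      have := G.degree_lt_card_verts u; simpa using this
    have hd1R : (1:ℝ) ≤ G.degree u := by exact_mod_cast hd1
    have hdnR : (G.degree u : ℝ) ≤ (n:ℝ) - 1 := by
      have h2 : (G.degree u : ℝ) + 1 ≤ n := by exact_mod_cast hdn
      linarith
    have hn2R : (2:ℝ) ≤ n := by exact_mod_cast hn2
    rcases lt_or_ge G.cliqueNum 4 with hω4 | hω4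
    · interval_cases hω : G.cliqueNum
      · -- ω = 2 : triangle-free
        have key : ∀ w ∈ G.neighborFinset u, (G.degree w : ℝ) ≤ (n:ℝ) - G.degree u := by
          intro w hw
          rw [SimpleGraph.mem_neighborFinset] at hw
          have hdisj : Disjoint (G.neighborFinset u) (G.neighborFinset w) := by
            rw [Finset.disjoint_left]
            intro z hz1 hz2
            rw [SimpleGraph.mem_neighborFinset] at hz1 hz2
            exact hcf {u, w, z} (SimpleGraph.is3Clique_triple_iff.mpr ⟨hw, hz1, hz2⟩)
          have hcard : G.degree u + G.degree w ≤ n := by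
            have h2 : (G.neighborFinset u ∪ G.neighborFinset w).card
                = G.degree u + G.degree w := Finset.card_union_of_disjoint hdisj
            have h3 := Finset.card_le_univ (G.neighborFinset u ∪ G.neighborFinset w)
            rw [h2] at h3
            simpa using h3
          have : (G.degree u : ℝ) + G.degree w ≤ n := by exact_mod_cast hcard
          linarith
        have hsum : ∑ w ∈ G.neighborFinset u, (G.degree w : ℝ)
            ≤ G.degree u * ((n:ℝ) - G.degree u) := by
          calc ∑ w ∈ G.neighborFinset u, (G.degree w : ℝ)
              ≤ ∑ _w ∈ G.neighborFinset u, ((n:ℝ) - G.degree u) :=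
                Finset.sum_le_sum key
            _ = G.degree u * ((n:ℝ) - G.degree u) := by
                rw [Finset.sum_const, nsmul_eq_mul, G.card_neighborFinset_eq_degree]
        have hgoal : μ ≤ (n:ℝ) := by nlinarith [hu, hsum, hd1R]
        calc μ ≤ (n:ℝ) := hgoal
          _ = (n:ℝ) / 2 * 2 := by ring
          _ = (n:ℝ) / 2 * ((2:ℕ):ℝ) := by norm_num
      · -- ω = 3 : K₄-free
        set T := G.neighborFinset u with hT
        have hTcard : T.card = G.degree u := G.card_neighborFinset_eq_degree u
        have hman : 2 * ∑ w ∈ T, (T.filter (G.Adj w)).card ≤ T.card ^ 2 := by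
          apply mantel_sum
          intro w hw z hz hwz
          have hwu : G.Adj u w := (SimpleGraph.mem_neighborFinset _ _ _).mp hw
          have hzu : G.Adj u z := (SimpleGraph.mem_neighborFinset _ _ _).mp hz
          have hdisj : Disjoint (T.filter (G.Adj w)) (T.filter (G.Adj z)) := by
            rw [Finset.disjoint_left]
            intro y hy1 hy2
            rw [Finset.mem_filter] at hy1 hy2
            have hyu : G.Adj u y := (SimpleGraph.mem_neighborFinset _ _ _).mp hy1.1
            have h3 : G.IsNClique 3 ({w, z, y} : Finset (Fin n)) :=
              SimpleGraph.is3Clique_triple_iff.mpr ⟨hwz, hy1.2, hy2.2⟩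
            have h4 : G.IsNClique 4 (insert u ({w, z, y} : Finset (Fin n))) := by
              apply h3.insert
              intro b hb
              simp only [Finset.mem_insert, Finset.mem_singleton] at hb
              rcases hb with rfl | rfl | rfl
              · exact hwu
              · exact hzu
              · exact hyu
            exact hcf _ h4
          have h5 : (T.filter (G.Adj w)).card + (T.filter (G.Adj z)).card
              = (T.filter (G.Adj w) ∪ T.filter (G.Adj z)).card :=
            (Finset.card_union_of_disjoint hdisj).symm
          rw [h5]
          exact Finset.card_le_card (Finset.union_subset (Finset.filter_subset _ _)
            (Finset.filter_subset _ _))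
        have hdegb : ∀ w ∈ T, G.degree w ≤ (T.filter (G.Adj w)).card + (n - G.degree u) := by
          intro w _hw
          have hsub : G.neighborFinset w ⊆ T.filter (G.Adj w) ∪ (Finset.univ \ T) := by
            intro z hz
            rw [SimpleGraph.mem_neighborFinset] at hz
            by_cases hzT : z ∈ T
            · exact Finset.mem_union_left _ (Finset.mem_filter.mpr ⟨hzT, hz⟩)
            · exact Finset.mem_union_right _ (Finset.mem_sdiff.mpr ⟨Finset.mem_univ z, hzT⟩)
          calc G.degree w = (G.neighborFinset w).card := (G.card_neighborFinset_eq_degree w).symm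
            _ ≤ (T.filter (G.Adj w) ∪ (Finset.univ \ T)).card := Finset.card_le_card hsub
            _ ≤ (T.filter (G.Adj w)).card + (Finset.univ \ T).card := Finset.card_union_le _ _
            _ = (T.filter (G.Adj w)).card + (n - G.degree u) := by
                rw [Finset.card_sdiff_of_subset (Finset.subset_univ T), hTcard]
                simp
        have hsumN : 2 * ∑ w ∈ T, G.degree w
            ≤ G.degree u ^ 2 + 2 * (G.degree u * (n - G.degree u)) := by
          have h6 : ∑ w ∈ T, G.degree w
              ≤ (∑ w ∈ T, (T.filter (G.Adj w)).card) + G.degree u * (n - G.degree u) := by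
            calc ∑ w ∈ T, G.degree w
                ≤ ∑ w ∈ T, ((T.filter (G.Adj w)).card + (n - G.degree u)) :=
                  Finset.sum_le_sum hdegb
              _ = (∑ w ∈ T, (T.filter (G.Adj w)).card) + G.degree u * (n - G.degree u) := by
                  rw [Finset.sum_add_distrib, Finset.sum_const, smul_eq_mul, hTcard]
          rw [hTcard] at hman
          omega
        have hsumR : 2 * ∑ w ∈ T, (G.degree w : ℝ)
            ≤ (G.degree u : ℝ) ^ 2 + 2 * ((G.degree u : ℝ) * ((n:ℝ) - G.degree u)) := by
          have h7 : ((2 * ∑ w ∈ T, G.degree w : ℕ) : ℝ)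
              ≤ ((G.degree u ^ 2 + 2 * (G.degree u * (n - G.degree u)) : ℕ) : ℝ) := by
            exact_mod_cast hsumN
          push_cast [Nat.cast_sub hdn.le] at h7
          linarith [h7]
        have hgoal : μ ≤ (n:ℝ) / 2 * 3 := by nlinarith [hu, hsumR, hd1R, hdnR, hn2R]
        calc μ ≤ (n:ℝ) / 2 * 3 := hgoal
          _ = (n:ℝ) / 2 * ((3:ℕ):ℝ) := by norm_num
    · -- ω ≥ 4 : crude bound q1 ≤ 2n - 2
      have hsum : ∑ w ∈ G.neighborFinset u, (G.degree w : ℝ)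
          ≤ G.degree u * ((n:ℝ) - 1) := by
        calc ∑ w ∈ G.neighborFinset u, (G.degree w : ℝ)
            ≤ ∑ _w ∈ G.neighborFinset u, ((n:ℝ) - 1) := by
              refine Finset.sum_le_sum fun w _ => ?_
              have h2 : G.degree w < n := by
                have := G.degree_lt_card_verts w; simpa using this
              have h3 : ((G.degree w + 1 : ℕ) : ℝ) ≤ n := by exact_mod_cast h2
              push_cast at h3
              linarith
          _ = G.degree u * ((n:ℝ) - 1) := by
              rw [Finset.sum_const, nsmul_eq_mul, G.card_neighborFinset_eq_degree]
      have hω4R : (4:ℝ) ≤ G.cliqueNum := by exact_mod_cast hω4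
      have hd0 : (0:ℝ) < G.degree u := by linarith
      have hmu : μ ≤ 2 * (n:ℝ) - 2 := by
        nlinarith [hu, hsum, hdnR, hd0]
      nlinarith [hmu, hn2R, hω4R]
end

section
/- Let G be a connected graph of order n with clique number ω = 2 (i.e., triangle-free with at least one edge). Then q₁(G) ≥ 2 + 2cos(π/n), with equality if and only if G is the path P_n. -/
open SimpleGraph Matrix RealInnerProductSpace
open scoped Classical

variable {n : ℕ}

lemma sL_mulVec (G : SimpleGraph (Fin n)) (x : Fin n → ℝ) (v : Fin n) :
    (signlessLaplacian G).mulVec x v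
      = (G.degree v : ℝ) * x v + ∑ w, (if G.Adj v w then x w else 0) := by
  unfold signlessLaplacian
  rw [Matrix.add_mulVec, Pi.add_apply, Matrix.mulVec_diagonal]
  congr 1
  simp only [Matrix.mulVec, dotProduct]
  apply Finset.sum_congr rfl
  intro w _
  simp only [SimpleGraph.adjMatrix_apply]
  split_ifs <;> simp

lemma sL_isHermitian (G : SimpleGraph (Fin n)) : (signlessLaplacian G).IsHermitian := by
  unfold signlessLaplacian
  apply Matrix.IsHermitian.add (Matrix.isHermitian_diagonal _)
  rw [Matrix.IsHermitian, conjTranspose_eq_transpose_of_trivial]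
  ext u v
  simp only [Matrix.transpose_apply, SimpleGraph.adjMatrix_apply]
  simp [G.adj_comm]

lemma repr_mulVec (A : Matrix (Fin n) (Fin n) ℝ) (hA : A.IsHermitian)
    (x : Fin n → ℝ) (i : Fin n) :
    (hA.eigenvectorBasis).repr ((WithLp.equiv 2 (Fin n → ℝ)).symm (A *ᵥ x)) i
      = hA.eigenvalues i * (hA.eigenvectorBasis).repr ((WithLp.equiv 2 (Fin n → ℝ)).symm x) i := by
  set b := hA.eigenvectorBasis
  set y : EuclideanSpace ℝ (Fin n) := (WithLp.equiv 2 (Fin n → ℝ)).symm x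
  have hT : (Matrix.toEuclideanLin A).IsSymmetric :=
    (Matrix.isHermitian_iff_isSymmetric.mp hA)
  have h1 : ((WithLp.equiv 2 (Fin n → ℝ)).symm (A *ᵥ x)) = (Matrix.toEuclideanLin A) y := rfl
  rw [h1, b.repr_apply_apply, ← hT (b i) y, b.repr_apply_apply]
  have h2 : (Matrix.toEuclideanLin A) (b i) = hA.eigenvalues i • (b i) := by
    apply (WithLp.equiv 2 (Fin n → ℝ)).injective
    exact hA.mulVec_eigenvectorBasis i
  rw [h2, real_inner_smul_left]

theorem rayleigh_bound [NeZero n] (A : Matrix (Fin n) (Fin n) ℝ) (hA : A.IsHermitian) :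
    ∃ μ : ℝ, (∃ x : Fin n → ℝ, x ≠ 0 ∧ A *ᵥ x = μ • x) ∧
      ∀ x : Fin n → ℝ, x ⬝ᵥ (A *ᵥ x) ≤ μ * (x ⬝ᵥ x) := by
  obtain ⟨i0, hi0⟩ := Finset.exists_max_image Finset.univ hA.eigenvalues
    ⟨⟨0, Nat.pos_of_ne_zero (NeZero.ne n)⟩, Finset.mem_univ _⟩
  refine ⟨hA.eigenvalues i0, ⟨⇑(hA.eigenvectorBasis i0), ?_, hA.mulVec_eigenvectorBasis i0⟩, ?_⟩
  · intro h
    have := hA.eigenvectorBasis.orthonormal.1 i0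
    rw [show hA.eigenvectorBasis i0 = ((WithLp.equiv 2 (Fin n → ℝ)).symm (0 : Fin n → ℝ)) from (WithLp.equiv 2 (Fin n → ℝ)).injective h] at this
    simp at this
  · intro x
    set b := hA.eigenvectorBasis
    set y : EuclideanSpace ℝ (Fin n) := (WithLp.equiv 2 (Fin n → ℝ)).symm x with hy
    have e1 : x ⬝ᵥ (A *ᵥ x) = ⟪y, (WithLp.equiv 2 (Fin n → ℝ)).symm (A *ᵥ x)⟫ := by
        simp [y, PiLp.inner_apply, dotProduct, mul_comm]
    have e2 : x ⬝ᵥ x = ⟪y, y⟫ := by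
      rw [PiLp.inner_apply]; simp [y, PiLp.inner_apply, dotProduct, mul_comm, sq]
    rw [e1, e2]
    rw [← b.repr.inner_map_map y ((WithLp.equiv 2 (Fin n → ℝ)).symm (A *ᵥ x)),
        ← b.repr.inner_map_map y y, PiLp.inner_apply, PiLp.inner_apply]
    simp only [RCLike.inner_apply, conj_trivial]
    rw [Finset.mul_sum]
    apply Finset.sum_le_sum
    intro i _
    rw [repr_mulVec A hA x i]
    have h1 : hA.eigenvalues i ≤ hA.eigenvalues i0 := hi0.2 i (Finset.mem_univ i)
    nlinarith [mul_self_nonneg (b.repr y i)]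

lemma dotProduct_self_pos' {x : Fin n → ℝ} (hx : x ≠ 0) : 0 < x ⬝ᵥ x := by
  obtain ⟨i, hi⟩ := Function.ne_iff.mp hx
  have h1 : (0:ℝ) < x i * x i := by
    rcases lt_or_gt_of_ne (show x i ≠ 0 from hi) with h | h <;> nlinarith
  calc (0:ℝ) < x i * x i := h1
    _ ≤ ∑ j, x j * x j :=
      Finset.single_le_sum (fun j _ => mul_self_nonneg (x j)) (Finset.mem_univ i)

lemma q1_spec [NeZero n] (G : SimpleGraph (Fin n)) :
    (∃ x : Fin n → ℝ, x ≠ 0 ∧ (signlessLaplacian G).mulVec x = q1 G • x) ∧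
      ∀ x : Fin n → ℝ, x ⬝ᵥ ((signlessLaplacian G).mulVec x) ≤ q1 G * (x ⬝ᵥ x) := by
  obtain ⟨μ, hex, hray⟩ := rayleigh_bound (signlessLaplacian G) (sL_isHermitian G)
  have hub : ∀ μ' ∈ {μ' : ℝ | ∃ x : Fin n → ℝ, x ≠ 0 ∧ (signlessLaplacian G).mulVec x = μ' • x},
      μ' ≤ μ := by
    rintro μ' ⟨x, hx0, hx⟩
    have h1 := hray x
    rw [hx] at h1
    have h2 : x ⬝ᵥ (μ' • x) = μ' * (x ⬝ᵥ x) := by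
      simp only [dotProduct, Pi.smul_apply, smul_eq_mul, Finset.mul_sum]
      exact Finset.sum_congr rfl fun i _ => by ring
    rw [h2] at h1
    have := dotProduct_self_pos' hx0
    nlinarith
  have hq : q1 G = μ := by
    apply le_antisymm
    · exact csSup_le ⟨μ, hex⟩ hub
    · exact le_csSup ⟨μ, hub⟩ hex
  rw [hq]; exact ⟨hex, hray⟩

lemma degree_eq_sum (G : SimpleGraph (Fin n)) (v : Fin n) :
    (G.degree v : ℝ) = ∑ w, if G.Adj v w then (1:ℝ) else 0 := by
  have h : G.neighborFinset v = Finset.univ.filter (fun w => G.Adj v w) := by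
    ext w; simp
  rw [SimpleGraph.degree, h, Finset.card_filter, Nat.cast_sum]
  exact Finset.sum_congr rfl fun w _ => by split_ifs <;> simp

lemma qform (G : SimpleGraph (Fin n)) (x : Fin n → ℝ) :
    x ⬝ᵥ ((signlessLaplacian G).mulVec x)
      = ∑ v, (G.degree v : ℝ) * (x v * x v)
        + ∑ v, ∑ w, (if G.Adj v w then x v * x w else 0) := by
  rw [dotProduct, ← Finset.sum_add_distrib]
  apply Finset.sum_congr rfl
  intro v _
  rw [sL_mulVec, mul_add, Finset.mul_sum]
  congr 1
  · ring
  · exact Finset.sum_congr rfl fun w _ => by split_ifs <;> ring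

lemma q1_ge_four_of_deg3 [NeZero n] (G : SimpleGraph (Fin n)) (v : Fin n)
    (hv : 3 ≤ G.degree v) : (4:ℝ) ≤ q1 G := by
  set d : ℝ := (G.degree v : ℝ) with hd
  have hd3 : (3:ℝ) ≤ d := by rw [hd]; exact_mod_cast hv
  set x : Fin n → ℝ := fun w => if w = v then (3:ℝ) else if G.Adj v w then 1 else 0 with hxdef
  have hxv : x v = 3 := by simp [hxdef]
  have hxnn : ∀ w, 0 ≤ x w := by
    intro w; simp only [hxdef]; split_ifs <;> norm_num
  have hxN : ∀ w ∈ G.neighborFinset v, x w = 1 := by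
    intro w hw
    rw [SimpleGraph.mem_neighborFinset] at hw
    have : w ≠ v := fun h => G.irrefl (h ▸ hw)
    simp [hxdef, this, hw]
  have hvN : v ∉ G.neighborFinset v := by simp
  have hcard : ∀ c : ℝ, ∑ _w ∈ G.neighborFinset v, c = d * c := by
    intro c; rw [Finset.sum_const, nsmul_eq_mul]; rfl
  set S := insert v (G.neighborFinset v) with hS
  -- norm
  have hnorm : x ⬝ᵥ x = 9 + d := by
    rw [dotProduct]
    rw [← Finset.sum_subset (Finset.subset_univ S) (fun w _ hw => ?_)]
    · rw [hS, Finset.sum_insert hvN, hxv]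
      rw [Finset.sum_congr rfl (fun w hw => show x w * x w = 1 by rw [hxN w hw]; norm_num),
        hcard 1]
      ring
    · simp only [hS, Finset.mem_insert, SimpleGraph.mem_neighborFinset] at hw
      push_neg at hw
      have : x w = 0 := by simp [hxdef, hw.1, hw.2]
      rw [this]; ring
  -- A bound
  have hA : 9 * d + d ≤ ∑ u, (G.degree u : ℝ) * (x u * x u) := by
    have hsub : ∑ u ∈ S, (G.degree u : ℝ) * (x u * x u)
        ≤ ∑ u, (G.degree u : ℝ) * (x u * x u) := by
      apply Finset.sum_le_sum_of_subset_of_nonneg (Finset.subset_univ S)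
      intro u _ _
      have := hxnn u; positivity
    refine le_trans ?_ hsub
    rw [hS, Finset.sum_insert hvN, hxv]
    have h1 : ∑ u ∈ G.neighborFinset v, (1:ℝ)
        ≤ ∑ u ∈ G.neighborFinset v, (G.degree u : ℝ) * (x u * x u) := by
      apply Finset.sum_le_sum
      intro u hu
      rw [hxN u hu]
      have : 0 < G.degree u := by
        rw [SimpleGraph.mem_neighborFinset] at hu
        exact G.degree_pos_iff_exists_adj u |>.mpr ⟨v, hu.symm⟩
      have : (1:ℝ) ≤ (G.degree u : ℝ) := by exact_mod_cast this
      nlinarith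
    rw [hcard 1] at h1
    nlinarith [h1]
  -- B bound
  have hB : 6 * d ≤ ∑ u, ∑ w, (if G.Adj u w then x u * x w else 0) := by
    have hgnn : ∀ u, (0:ℝ) ≤ ∑ w, (if G.Adj u w then x u * x w else 0) := by
      intro u
      apply Finset.sum_nonneg
      intro w _
      split_ifs
      · exact mul_nonneg (hxnn u) (hxnn w)
      · exact le_rfl
    have hsub : ∑ u ∈ S, ∑ w, (if G.Adj u w then x u * x w else 0)
        ≤ ∑ u, ∑ w, (if G.Adj u w then x u * x w else 0) :=
      Finset.sum_le_sum_of_subset_of_nonneg (Finset.subset_univ S) (fun u _ _ => hgnn u)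
    refine le_trans ?_ hsub
    rw [hS, Finset.sum_insert hvN]
    have hgv : ∑ w, (if G.Adj v w then x v * x w else 0) = 3 * d := by
      have : ∀ w, (if G.Adj v w then x v * x w else 0) = 3 * (if G.Adj v w then (1:ℝ) else 0) := by
        intro w
        by_cases h : G.Adj v w
        · have hwv : w ≠ v := fun he => G.irrefl (he ▸ h)
          simp [h, hxdef, hwv]
        · simp [h]
      rw [Finset.sum_congr rfl (fun w _ => this w), ← Finset.mul_sum, ← degree_eq_sum]
    have hgu : ∀ u ∈ G.neighborFinset v, (3:ℝ) ≤ ∑ w, (if G.Adj u w then x u * x w else 0) := by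
      intro u hu
      rw [SimpleGraph.mem_neighborFinset] at hu
      have huv : u ≠ v := fun he => G.irrefl (he ▸ hu)
      have hterm : (if G.Adj u v then x u * x v else 0) = 3 := by
        rw [if_pos hu.symm, hxv]
        have : x u = 1 := by simp [hxdef, huv, hu]
        rw [this]; ring
      calc (3:ℝ) = (if G.Adj u v then x u * x v else 0) := hterm.symm
        _ ≤ ∑ w, (if G.Adj u w then x u * x w else 0) := by
            apply Finset.single_le_sum (f := fun w => if G.Adj u w then x u * x w else 0)
              (fun w _ => ?_) (Finset.mem_univ v)
            split_ifs
            · exact mul_nonneg (hxnn u) (hxnn w)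
            · exact le_rfl
    have h2 : ∑ u ∈ G.neighborFinset v, (3:ℝ)
        ≤ ∑ u ∈ G.neighborFinset v, ∑ w, (if G.Adj u w then x u * x w else 0) :=
      Finset.sum_le_sum hgu
    rw [hcard 3] at h2
    rw [hgv]
    nlinarith [h2]
  have hx0 : x ≠ 0 := by
    intro h
    have : x v = 0 := by rw [h]; rfl
    rw [hxv] at this; norm_num at this
  have hray := (q1_spec G).2 x
  rw [qform, hnorm] at hray
  have key : 16 * d ≤ q1 G * (9 + d) := by nlinarith [hray, hA, hB]
  by_contra hq
  push_neg at hq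
  have h2 : q1 G * (9 + d) < 4 * (9 + d) := by nlinarith
  nlinarith

lemma q1_ge_four_of_all_deg2 [NeZero n] (G : SimpleGraph (Fin n))
    (h2 : ∀ v, G.degree v = 2) : (4:ℝ) ≤ q1 G := by
  set x : Fin n → ℝ := fun _ => 1 with hxdef
  have hx0 : x ≠ 0 := by
    intro h
    have : x ⟨0, Nat.pos_of_ne_zero (NeZero.ne n)⟩ = 0 := by rw [h]; rfl
    simp [hxdef] at this
  have hray := (q1_spec G).2 x
  rw [qform] at hray
  have hA : ∑ v, (G.degree v : ℝ) * (x v * x v) = 2 * n := by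
    rw [Finset.sum_congr rfl (fun v _ =>
      show (G.degree v : ℝ) * (x v * x v) = 2 by rw [h2 v]; norm_num [hxdef])]
    rw [Finset.sum_const, Finset.card_univ, Fintype.card_fin, nsmul_eq_mul]; ring
  have hB : ∑ v, ∑ w, (if G.Adj v w then x v * x w else 0) = 2 * n := by
    have hrow : ∀ v, ∑ w, (if G.Adj v w then x v * x w else 0) = (2:ℝ) := by
      intro v
      have : ∀ w, (if G.Adj v w then x v * x w else 0) = (if G.Adj v w then (1:ℝ) else 0) := by
        intro w; simp [hxdef]
      rw [Finset.sum_congr rfl (fun w _ => this w), ← degree_eq_sum, h2 v]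
      norm_num
    rw [Finset.sum_congr rfl (fun v _ => hrow v)]
    rw [Finset.sum_const, Finset.card_univ, Fintype.card_fin, nsmul_eq_mul]; ring
  have hnorm : x ⬝ᵥ x = n := by
    simp [dotProduct, hxdef, Finset.card_univ]
  rw [hA, hB, hnorm] at hray
  have hn1 : (1:ℝ) ≤ n := by
    have := Nat.pos_of_ne_zero (NeZero.ne n); exact_mod_cast this
  nlinarith [hray]

lemma sL_apply (G : SimpleGraph (Fin n)) (i j : Fin n) :
    signlessLaplacian G i j
      = (if i = j then (G.degree i : ℝ) else 0) + (if G.Adj i j then 1 else 0) := by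
  unfold signlessLaplacian
  rw [Matrix.add_apply, Matrix.diagonal_apply]
  congr 1

lemma sL_nonneg (G : SimpleGraph (Fin n)) (i j : Fin n) : 0 ≤ signlessLaplacian G i j := by
  rw [sL_apply]
  have : (0:ℝ) ≤ (G.degree i : ℝ) := Nat.cast_nonneg _
  split_ifs <;> positivity

lemma perron_comparison (A : Matrix (Fin n) (Fin n) ℝ) (hA : ∀ i j, 0 ≤ A i j)
    (u : Fin n → ℝ) (hu : ∀ i, 0 < u i) (lam : ℝ) (hAu : A *ᵥ u = lam • u)
    (μ : ℝ) (x : Fin n → ℝ) (hx0 : x ≠ 0) (hx : A *ᵥ x = μ • x) : μ ≤ lam := by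
  obtain ⟨i1, hi1⟩ := Function.ne_iff.mp hx0
  obtain ⟨j0, _, hj0⟩ := Finset.exists_max_image Finset.univ (fun j => |x j| / u j)
    ⟨i1, Finset.mem_univ i1⟩
  set c := |x j0| / u j0 with hc
  have hcpos : 0 < c := by
    have h1 : |x i1| / u i1 ≤ c := hj0 i1 (Finset.mem_univ i1)
    have h2 : 0 < |x i1| / u i1 := div_pos (abs_pos.mpr hi1) (hu i1)
    linarith
  have hbound : ∀ k, |x k| ≤ c * u k := by
    intro k
    have h1 : |x k| / u k ≤ c := hj0 k (Finset.mem_univ k)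
    rw [div_le_iff₀ (hu k)] at h1
    linarith [h1]
  have hxj0 : |x j0| = c * u j0 := by
    rw [hc, div_mul_cancel₀]
    exact ne_of_gt (hu j0)
  have hmux : (A *ᵥ x) j0 = μ * x j0 := by rw [hx]; rfl
  have hlamu : (A *ᵥ u) j0 = lam * u j0 := by rw [hAu]; rfl
  have habs : |μ| * |x j0| ≤ c * (lam * u j0) := by
    rw [← abs_mul, ← hmux]
    calc |(A *ᵥ x) j0| = |∑ k, A j0 k * x k| := rfl
      _ ≤ ∑ k, |A j0 k * x k| := Finset.abs_sum_le_sum_abs _ _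
      _ = ∑ k, A j0 k * |x k| := by
          exact Finset.sum_congr rfl fun k _ => by
            rw [abs_mul, abs_of_nonneg (hA j0 k)]
      _ ≤ ∑ k, A j0 k * (c * u k) := by
          apply Finset.sum_le_sum
          intro k _
          exact mul_le_mul_of_nonneg_left (hbound k) (hA j0 k)
      _ = c * ∑ k, A j0 k * u k := by rw [Finset.mul_sum]; exact Finset.sum_congr rfl fun k _ => by ring
      _ = c * (lam * u j0) := by rw [← hlamu]; rfl
  rw [hxj0] at habs
  have hup : 0 < u j0 := hu j0
  have h3 : |μ| ≤ lam := by
    nlinarith [habs, mul_pos hcpos hup]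
  calc μ ≤ |μ| := le_abs_self μ
    _ ≤ lam := h3

lemma sL_mulVec' (G : SimpleGraph (Fin n)) (x : Fin n → ℝ) (v : Fin n) :
    (signlessLaplacian G).mulVec x v = ∑ w, (if G.Adj v w then x v + x w else 0) := by
  rw [sL_mulVec, degree_eq_sum, Finset.sum_mul]
  rw [← Finset.sum_add_distrib]
  exact Finset.sum_congr rfl fun w _ => by split_ifs <;> ring

lemma sum_coord (f : Fin n → ℝ) (k : ℕ) :
    ∑ w : Fin n, (if (w : ℕ) = k then f w else 0)
      = if h : k < n then f ⟨k, h⟩ else 0 := by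
  split_ifs with h
  · rw [Finset.sum_eq_single (⟨k, h⟩ : Fin n)]
    · simp
    · intro w _ hw
      rw [if_neg]
      intro hk
      exact hw (Fin.ext hk)
    · intro habs
      exact absurd (Finset.mem_univ _) habs
  · apply Finset.sum_eq_zero
    intro w _
    rw [if_neg]
    intro hk
    exact h (hk ▸ w.isLt)

lemma path_mulVec (x : Fin n → ℝ) (j : Fin n) :
    (signlessLaplacian (pathGraph n)).mulVec x j
      = (if h : (j:ℕ) + 1 < n then x j + x ⟨(j:ℕ)+1, h⟩ else 0)
        + (if h : 0 < (j:ℕ) then x j + x ⟨(j:ℕ)-1, lt_of_le_of_lt (Nat.sub_le _ _) j.isLt⟩ else 0) := by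
  rw [sL_mulVec']
  have hsplit : ∀ w : Fin n, (if (pathGraph n).Adj j w then x j + x w else 0)
      = (if (w:ℕ) = (j:ℕ) + 1 then x j + x w else 0)
        + (if (w:ℕ) + 1 = (j:ℕ) then x j + x w else 0) := by
    intro w
    rw [pathGraph_adj]
    by_cases h1 : (j:ℕ) + 1 = (w:ℕ) <;> by_cases h2 : (w:ℕ) + 1 = (j:ℕ)
    · exact absurd h1 (by omega)
    · rw [if_pos (Or.inl h1), if_pos h1.symm, if_neg h2, add_zero]
    · rw [if_pos (Or.inr h2), if_neg (fun h => h1 h.symm), if_pos h2, zero_add]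
    · rw [if_neg (fun h => h.elim h1 h2), if_neg (fun h => h1 h.symm), if_neg h2, add_zero]
  rw [Finset.sum_congr rfl (fun w _ => hsplit w), Finset.sum_add_distrib]
  congr 1
  · rw [sum_coord]
  · have : ∀ w : Fin n, (if (w:ℕ) + 1 = (j:ℕ) then x j + x w else 0)
        = (if (w:ℕ) = (j:ℕ) - 1 ∧ 0 < (j:ℕ) then x j + x w else 0) := by
      intro w
      by_cases h : (w:ℕ) + 1 = (j:ℕ)
      · rw [if_pos h, if_pos ⟨by omega, by omega⟩]
      · rw [if_neg h, if_neg (by intro hc; omega)]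
    rw [Finset.sum_congr rfl (fun w _ => this w)]
    by_cases hj : 0 < (j:ℕ)
    · have : ∀ w : Fin n, (if (w:ℕ) = (j:ℕ) - 1 ∧ 0 < (j:ℕ) then x j + x w else 0)
          = (if (w:ℕ) = (j:ℕ) - 1 then x j + x w else 0) := by
        intro w
        by_cases h : (w:ℕ) = (j:ℕ) - 1
        · rw [if_pos ⟨h, hj⟩, if_pos h]
        · rw [if_neg (fun hc => h hc.1), if_neg h]
      rw [Finset.sum_congr rfl (fun w _ => this w), sum_coord]
      rw [dif_pos hj, dif_pos (by omega : (j:ℕ) - 1 < n)]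
    · rw [dif_neg hj]
      apply Finset.sum_eq_zero
      intro w _
      rw [if_neg (fun hc => hj hc.2)]

noncomputable def pathVec (n : ℕ) : Fin n → ℝ :=
  fun j => Real.sin ((2 * (j:ℕ) + 1) * Real.pi / (2 * n))

lemma pathVec_pos [NeZero n] (j : Fin n) : 0 < pathVec n j := by
  have hn : (0:ℝ) < n := by
    have := Nat.pos_of_ne_zero (NeZero.ne n); exact_mod_cast this
  apply Real.sin_pos_of_pos_of_lt_pi
  · apply div_pos
    · positivity
    · linarith
  · rw [div_lt_iff₀ (by linarith)]
    have h1 : ((j:ℕ) : ℝ) + 1 ≤ n := by exact_mod_cast j.isLt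
    nlinarith [Real.pi_pos]

lemma sin_key (s : ℝ) : Real.sin (3 * s) = (1 + 2 * Real.cos (2 * s)) * Real.sin s := by
  have h3 : (3:ℝ) * s = 2 * s + s := by ring
  rw [h3, Real.sin_add, Real.sin_two_mul, Real.cos_two_mul]
  have := Real.sin_sq_add_cos_sq s
  nlinarith [this]

lemma path_eig [NeZero n] :
    (signlessLaplacian (pathGraph n)).mulVec (pathVec n)
      = (2 + 2 * Real.cos (Real.pi / n)) • (pathVec n) := by
  have hn : (0:ℝ) < n := by
    have := Nat.pos_of_ne_zero (NeZero.ne n); exact_mod_cast this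
  have hn' : (n:ℝ) ≠ 0 := ne_of_gt hn
  set N : ℝ := (n:ℝ) with hN
  set s : ℝ := Real.pi / (2 * N) with hs
  have hθ : Real.pi / N = 2 * s := by rw [hs]; field_simp
  have key1 : ∀ a : ℝ, Real.sin (a - 2*s) + Real.sin (a + 2*s)
      = 2 * Real.cos (2*s) * Real.sin a := by
    intro a; rw [Real.sin_sub, Real.sin_add]; ring
  have hval : ∀ (k : ℕ) (hk : k < n), pathVec n ⟨k, hk⟩ = Real.sin ((2*(k:ℝ)+1) * s) := by
    intro k hk
    show Real.sin _ = _
    congr 1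
    rw [hs]; push_cast; field_simp
    exact div_self hn'
  funext j
  rw [Pi.smul_apply, smul_eq_mul, path_mulVec, hθ]
  by_cases hj1 : (j:ℕ) + 1 < n <;> by_cases hj0 : 0 < (j:ℕ)
  · -- interior
    rw [dif_pos hj1, dif_pos hj0]
    set a : ℝ := (2*((j:ℕ):ℝ)+1) * s with ha
    have e0 : pathVec n j = Real.sin a := by
      have := hval (j:ℕ) j.isLt
      simpa using this
    have e1 : pathVec n ⟨(j:ℕ)+1, hj1⟩ = Real.sin (a + 2*s) := by
      rw [hval ((j:ℕ)+1) hj1]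
      congr 1
      push_cast
      rw [ha]; ring
    have e2 : pathVec n ⟨(j:ℕ)-1, lt_of_le_of_lt (Nat.sub_le _ _) j.isLt⟩
        = Real.sin (a - 2*s) := by
      rw [hval ((j:ℕ)-1) (lt_of_le_of_lt (Nat.sub_le _ _) j.isLt)]
      congr 1
      have hc : (((j:ℕ) - 1 : ℕ) : ℝ) = ((j:ℕ):ℝ) - 1 := by
        have : 1 ≤ (j:ℕ) := hj0
        push_cast [this]
        ring
      rw [hc, ha]; ring
    rw [e0, e1, e2]
    linarith [key1 a]
  · -- j = 0, n ≥ 2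
    have hj : (j:ℕ) = 0 := by omega
    rw [dif_pos hj1, dif_neg hj0, add_zero]
    have e0 : pathVec n j = Real.sin s := by
      show Real.sin _ = _
      congr 1
      rw [hj, hs]; push_cast; ring
    have e1 : pathVec n ⟨(j:ℕ)+1, hj1⟩ = Real.sin (3*s) := by
      rw [hval ((j:ℕ)+1) hj1]
      congr 1
      rw [hj]; push_cast; ring
    rw [e0, e1]
    linarith [sin_key s]
  · -- j = n-1, n ≥ 2
    have hj : (j:ℕ) = n - 1 := by have := j.isLt; omega
    have hn2 : 2 ≤ n := by omega
    have hcast : ((n:ℕ):ℝ) = N := rfl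
    have hpi : Real.pi = 2 * N * s := by rw [hs]; field_simp
    rw [dif_neg hj1, dif_pos hj0, zero_add]
    have e0 : pathVec n j = Real.sin s := by
      have h1 : pathVec n j = Real.sin (Real.pi - s) := by
        show Real.sin _ = _
        congr 1
        rw [hj]
        have hc : (((n - 1 : ℕ)) : ℝ) = N - 1 := by
          have : 1 ≤ n := by omega
          push_cast [this]; ring
        rw [hc, hpi, hs]; field_simp; ring
      rw [h1, Real.sin_pi_sub]
    have e2 : pathVec n ⟨(j:ℕ)-1, lt_of_le_of_lt (Nat.sub_le _ _) j.isLt⟩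
        = Real.sin (3*s) := by
      have h1 : pathVec n ⟨(j:ℕ)-1, lt_of_le_of_lt (Nat.sub_le _ _) j.isLt⟩
          = Real.sin (Real.pi - 3*s) := by
        rw [hval ((j:ℕ)-1) (lt_of_le_of_lt (Nat.sub_le _ _) j.isLt)]
        congr 1
        rw [hj]
        have hc : (((n - 1 - 1 : ℕ)) : ℝ) = N - 2 := by
          have : 2 ≤ n := hn2
          have h3 : n - 1 - 1 = n - 2 := by omega
          rw [h3]
          push_cast [hn2]; ring
        rw [hc, hpi, hs]; field_simp; ring
      rw [h1, Real.sin_pi_sub]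
    rw [e0, e2]
    linarith [sin_key s]
  · -- n = 1
    have hn1 : n = 1 := by have := j.isLt; omega
    rw [dif_neg hj1, dif_neg hj0, add_zero]
    have h2s : 2 * s = Real.pi := by
      rw [hs, hN, hn1]; push_cast; field_simp
    rw [h2s, Real.cos_pi]
    ring

theorem q1_path [NeZero n] : q1 (pathGraph n) = 2 + 2 * Real.cos (Real.pi / n) := by
  set lam : ℝ := 2 + 2 * Real.cos (Real.pi / n) with hlam
  have hv0 : pathVec n ≠ 0 := by
    intro h
    have hj : (⟨0, Nat.pos_of_ne_zero (NeZero.ne n)⟩ : Fin n) = ⟨0, Nat.pos_of_ne_zero (NeZero.ne n)⟩ := rfl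
    have := pathVec_pos (n := n) ⟨0, Nat.pos_of_ne_zero (NeZero.ne n)⟩
    rw [h] at this
    exact lt_irrefl _ this
  have hmem : lam ∈ {μ : ℝ | ∃ x : Fin n → ℝ, x ≠ 0 ∧ (signlessLaplacian (pathGraph n)).mulVec x = μ • x} :=
    ⟨pathVec n, hv0, path_eig⟩
  have hub : ∀ μ' ∈ {μ : ℝ | ∃ x : Fin n → ℝ, x ≠ 0 ∧ (signlessLaplacian (pathGraph n)).mulVec x = μ • x}, μ' ≤ lam := by
    rintro μ' ⟨x, hx0, hx⟩
    exact perron_comparison _ (sL_nonneg _) (pathVec n) pathVec_pos lam path_eig μ' x hx0 hx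
  exact le_antisymm (csSup_le ⟨lam, hmem⟩ hub) (le_csSup ⟨lam, hub⟩ hmem)

lemma q1_iso_subset {G H : SimpleGraph (Fin n)} (e : G ≃g H) (μ : ℝ)
    (h : ∃ x : Fin n → ℝ, x ≠ 0 ∧ (signlessLaplacian H).mulVec x = μ • x) :
    ∃ y : Fin n → ℝ, y ≠ 0 ∧ (signlessLaplacian G).mulVec y = μ • y := by
  obtain ⟨x, hx0, hx⟩ := h
  refine ⟨x ∘ e, ?_, ?_⟩
  · intro h0
    apply hx0
    funext w
    have := congrFun h0 (e.symm w)
    simpa using this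
  · funext v
    have hdeg : (G.degree v : ℝ) = (H.degree (e v) : ℝ) := by
      rw [degree_eq_sum, degree_eq_sum]
      rw [← Equiv.sum_comp e.toEquiv (fun w => if H.Adj (e v) w then (1:ℝ) else 0)]
      refine Finset.sum_congr rfl fun w _ => ?_
      have hiff : H.Adj (e v) (e.toEquiv w) ↔ G.Adj v w := e.map_adj_iff
      by_cases h : G.Adj v w
      · rw [if_pos h, if_pos (hiff.mpr h)]
      · rw [if_neg h, if_neg (fun hc => h (hiff.mp hc))]
    have hsum : ∑ w, (if G.Adj v w then x (e w) else 0)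
        = ∑ w, (if H.Adj (e v) w then x w else 0) := by
      rw [← Equiv.sum_comp e.toEquiv (fun w => if H.Adj (e v) w then x w else 0)]
      refine Finset.sum_congr rfl fun w _ => ?_
      have hiff : H.Adj (e v) (e.toEquiv w) ↔ G.Adj v w := e.map_adj_iff
      by_cases h : G.Adj v w
      · rw [if_pos h, if_pos (hiff.mpr h)]; rfl
      · rw [if_neg h, if_neg (fun hc => h (hiff.mp hc))]
    rw [sL_mulVec]
    show (G.degree v : ℝ) * x (e v) + ∑ w, (if G.Adj v w then x (e w) else 0) = μ * x (e v)
    rw [hdeg, hsum]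
    have := congrFun hx (e v)
    rw [sL_mulVec] at this
    exact this

lemma q1_iso {G H : SimpleGraph (Fin n)} (e : G ≃g H) : q1 G = q1 H := by
  unfold q1
  congr 1
  ext μ
  exact ⟨fun h => q1_iso_subset e.symm μ h, fun h => q1_iso_subset e μ h⟩

lemma exists_adj_dist_pred (G : SimpleGraph (Fin n)) (hconn : G.Connected) (v0 u : Fin n)
    (k : ℕ) (h : G.dist v0 u = k + 1) : ∃ u', G.Adj u u' ∧ G.dist v0 u' = k := by
  obtain ⟨p, hp⟩ := hconn.exists_walk_length_eq_dist u v0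
  rw [SimpleGraph.dist_comm, h] at hp
  cases p with
  | nil => simp at hp
  | cons hadj r =>
    rename_i w
    refine ⟨w, hadj, ?_⟩
    rw [SimpleGraph.Walk.length_cons] at hp
    have h1 : G.dist v0 w ≤ k := by
      have := SimpleGraph.dist_le r
      rw [SimpleGraph.dist_comm]
      omega
    have h2 : k ≤ G.dist v0 w := by
      have ht := hconn.dist_triangle (u := v0) (v := w) (w := u)
      have hwu : G.dist w u ≤ 1 := by
        have : G.dist w u = 1 := SimpleGraph.dist_eq_one_iff_adj.mpr hadj.symm
        omega
      omega
    omega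

lemma level_unique (G : SimpleGraph (Fin n)) (hconn : G.Connected)
    (hdeg : ∀ v, G.degree v ≤ 2) (v0 : Fin n) (hv0 : G.degree v0 ≤ 1) :
    ∀ k u w, G.dist v0 u = k → G.dist v0 w = k → u = w := by
  intro k
  induction k using Nat.strong_induction_on with
  | _ k IH =>
    match k with
    | 0 =>
      intro u w hu hw
      have h1 : v0 = u := ((hconn v0 u).dist_eq_zero_iff).mp hu
      have h2 : v0 = w := ((hconn v0 w).dist_eq_zero_iff).mp hw
      rw [← h1, ← h2]
    | 1 =>
      intro u w hu hw
      have h1 : G.Adj v0 u := SimpleGraph.dist_eq_one_iff_adj.mp hu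
      have h2 : G.Adj v0 w := SimpleGraph.dist_eq_one_iff_adj.mp hw
      have hcard : (G.neighborFinset v0).card ≤ 1 := hv0
      exact Finset.card_le_one.mp hcard u (by simpa using h1) w (by simpa using h2)
    | (m+2) =>
      intro u w hu hw
      obtain ⟨u', hu'adj, hu'⟩ := exists_adj_dist_pred G hconn v0 u (m+1) hu
      obtain ⟨w', hw'adj, hw'⟩ := exists_adj_dist_pred G hconn v0 w (m+1) hw
      have huw' : u' = w' := IH (m+1) (by omega) u' w' hu' hw'
      obtain ⟨z, hzadj, hz⟩ := exists_adj_dist_pred G hconn v0 u' m hu'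
      by_contra hne
      have hzu : z ≠ u := by intro h; rw [h] at hz; omega
      have hzw : z ≠ w := by intro h; rw [h] at hz; omega
      have hsub : {u, w, z} ⊆ G.neighborFinset u' := by
        intro a ha
        simp only [Finset.mem_insert, Finset.mem_singleton] at ha
        rw [SimpleGraph.mem_neighborFinset]
        rcases ha with rfl | rfl | rfl
        · exact hu'adj.symm
        · rw [huw']; exact hw'adj.symm
        · exact hzadj
      have hcard3 : ({u, w, z} : Finset (Fin n)).card = 3 := by
        rw [Finset.card_insert_of_notMem (by simp [hne, hzu.symm, hzw.symm]),
          Finset.card_insert_of_notMem (by simp [hzw.symm]), Finset.card_singleton]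
      have := Finset.card_le_card hsub
      rw [hcard3] at this
      have := hdeg u'
      rw [SimpleGraph.degree] at this
      omega

theorem classify (G : SimpleGraph (Fin n)) (hconn : G.Connected)
    (hdeg : ∀ v, G.degree v ≤ 2) (v0 : Fin n) (hv0 : G.degree v0 ≤ 1) :
    Nonempty (G ≃g pathGraph n) := by
  have huniq := level_unique G hconn hdeg v0 hv0
  have hlt : ∀ u, G.dist v0 u < n := by
    intro u
    obtain ⟨p, hp⟩ := hconn.exists_walk_length_eq_dist v0 u
    have h1 : G.dist v0 u ≤ p.bypass.length := SimpleGraph.dist_le _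
    have h2 : p.bypass.length < Fintype.card (Fin n) := (p.bypass_isPath).length_lt
    rw [Fintype.card_fin] at h2
    omega
  set f : Fin n → Fin n := fun u => ⟨G.dist v0 u, hlt u⟩ with hf
  have hinj : Function.Injective f := by
    intro u w h
    have : G.dist v0 u = G.dist v0 w := by
      have := congrArg Fin.val h
      simpa [hf] using this
    exact huniq (G.dist v0 w) u w this rfl
  have hbij : Function.Bijective f := Finite.injective_iff_bijective.mp hinj
  have hstep : ∀ u w : Fin n, G.dist v0 w = G.dist v0 u + 1 → G.Adj u w := by
    intro u w h
    obtain ⟨w', hadj, hd⟩ := exists_adj_dist_pred G hconn v0 w (G.dist v0 u) h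
    have : w' = u := huniq (G.dist v0 u) w' u hd rfl
    rw [this] at hadj
    exact hadj.symm
  have hadj1 : ∀ u w : Fin n, G.Adj u w →
      G.dist v0 w = G.dist v0 u + 1 ∨ G.dist v0 u = G.dist v0 w + 1 := by
    intro u w hadj
    have h1 : G.dist v0 w ≤ G.dist v0 u + 1 := by
      have ht := hconn.dist_triangle (u := v0) (v := u) (w := w)
      have : G.dist u w = 1 := SimpleGraph.dist_eq_one_iff_adj.mpr hadj
      omega
    have h2 : G.dist v0 u ≤ G.dist v0 w + 1 := by
      have ht := hconn.dist_triangle (u := v0) (v := w) (w := u)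
      have : G.dist w u = 1 := SimpleGraph.dist_eq_one_iff_adj.mpr hadj.symm
      omega
    have h3 : G.dist v0 u ≠ G.dist v0 w := by
      intro h
      exact G.irrefl (huniq (G.dist v0 w) u w h rfl ▸ hadj)
    omega
  refine ⟨⟨Equiv.ofBijective f hbij, ?_⟩⟩
  intro u w
  show (pathGraph n).Adj (f u) (f w) ↔ G.Adj u w
  rw [pathGraph_adj]
  constructor
  · rintro (h | h)
    · exact hstep u w (by simpa [hf] using h.symm)
    · exact (hstep w u (by simpa [hf] using h.symm)).symm
  · intro hadj
    rcases hadj1 u w hadj with h | h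
    · left; simp [hf, h]
    · right; simp [hf, h]


theorem q1_ge_of_cliqueNum_two (n : ℕ) (G : SimpleGraph (Fin n)) (hconn : G.Connected)
    (hw : G.cliqueNum = 2) :
    q1 G ≥ 2 + 2 * Real.cos (Real.pi / n) ∧
      (q1 G = 2 + 2 * Real.cos (Real.pi / n) ↔ Nonempty (G ≃g pathGraph n)) := by
  have hne : Nonempty (Fin n) := hconn.nonempty
  have hn0 : n ≠ 0 := by rintro rfl; exact hne.elim (fun v => v.elim0)
  haveI : NeZero n := ⟨hn0⟩
  by_cases hiso : Nonempty (G ≃g pathGraph n)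
  · obtain ⟨e⟩ := hiso
    have heq : q1 G = 2 + 2 * Real.cos (Real.pi / n) := (q1_iso e).trans q1_path
    exact ⟨ge_of_eq heq, ⟨fun _ => ⟨e⟩, fun _ => heq⟩⟩
  · have h4 : (4:ℝ) ≤ q1 G := by
      by_cases h3 : ∃ v, 3 ≤ G.degree v
      · obtain ⟨v, hv⟩ := h3
        exact q1_ge_four_of_deg3 G v hv
      · push_neg at h3
        by_cases h2 : ∀ v, G.degree v = 2
        · exact q1_ge_four_of_all_deg2 G h2
        · push_neg at h2
          obtain ⟨v0, hv0⟩ := h2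
          have hdeg : ∀ v, G.degree v ≤ 2 := fun v => by have := h3 v; omega
          have hv0' : G.degree v0 ≤ 1 := by have := h3 v0; omega
          exact absurd (classify G hconn hdeg v0 hv0') hiso
    have hn : (0:ℝ) < n := by
      have := Nat.pos_of_ne_zero hn0; exact_mod_cast this
    have hn1 : (1:ℝ) ≤ n := by
      have := Nat.pos_of_ne_zero hn0; exact_mod_cast this
    have h1 : 0 < Real.pi / n := div_pos Real.pi_pos hn
    have h2 : Real.pi / n ≤ Real.pi := by
      rw [div_le_iff₀ hn]
      nlinarith [Real.pi_pos]
    have hcoslt : Real.cos (Real.pi / n) < 1 := by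
      refine lt_of_le_of_ne (Real.cos_le_one _) (fun hc => ?_)
      have h3 := (Real.cos_eq_one_iff_of_lt_of_lt
        (x := Real.pi / n) (by linarith [Real.pi_pos]) (by linarith [Real.pi_pos])).mp hc
      linarith
    have hlt : 2 + 2 * Real.cos (Real.pi / n) < 4 := by linarith
    refine ⟨le_of_lt (lt_of_lt_of_le hlt h4), ⟨fun h => ?_, fun h => absurd h hiso⟩⟩
    exact absurd h (by linarith)
end
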